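/- arXiv:1501.01913 — 3 statements merged into one kernel-verified Lean document; each statement's English description precedes it below -/
import Mathlib

section
/- For every integer t ≥ 3, the family Forb(K_t) of K_t-free graphs is 𝔅(K_{t-1})-stable. -/
open Filter

namespace TuranGT

/-- An `r`-graph: an `r`-uniform hypergraph with vertex set `{0, ..., n-1} ⊆ ℕ`. -/
structure RGraph (r : ℕ) where
  n : ℕ
  edges : Finset (Finset ℕ)
  uniform : ∀ e ∈ edges, e.card = r
  valid : ∀ e ∈ edges, ∀ v ∈ e, v < n

variable {r : ℕ}

/-- The link of a vertex `v`: the set of `(r-1)`-sets `I` with `I ∪ {v}` an edge. -/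
def link (F : RGraph r) (v : ℕ) : Finset (Finset ℕ) :=
  (F.edges.filter fun e => v ∈ e).image fun e => e.erase v

/-- `G` contains a copy of `H` as a subgraph. -/
def ContainsCopy (G H : RGraph r) : Prop :=
  ∃ f : ℕ → ℕ, Set.InjOn f (Set.Iio H.n) ∧ (∀ v < H.n, f v < G.n) ∧
    ∀ e ∈ H.edges, e.image f ∈ G.edges

/-- `G` is `𝔉`-free: it contains no member of `𝔉` as a subgraph. -/
def FreeFam (𝔉 : Set (RGraph r)) (G : RGraph r) : Prop :=
  ∀ H ∈ 𝔉, ¬ ContainsCopy G H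

/-- The Turán number `ex(n, 𝔉)`. -/
noncomputable def exNum (r n : ℕ) (𝔉 : Set (RGraph r)) : ℕ :=
  sSup {k | ∃ G : RGraph r, G.n = n ∧ FreeFam 𝔉 G ∧ G.edges.card = k}

/-- `φ` witnesses that `G` is a blowup of `F`: fibers of `φ` form a blowup partition. -/
def IsBlowupMap (F G : RGraph r) (φ : ℕ → ℕ) : Prop :=
  (∀ v < G.n, φ v < F.n) ∧
    ∀ e : Finset ℕ, e ∈ G.edges ↔
      ((∀ v ∈ e, v < G.n) ∧ Set.InjOn φ (e : Set ℕ) ∧ e.image φ ∈ F.edges)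

/-- `G` is (isomorphic to) a blowup of `F` (cloning and deleting vertices). -/
def IsBlowup (F G : RGraph r) : Prop := ∃ φ : ℕ → ℕ, IsBlowupMap F G φ

/-- The family `𝔅(S)` of all blowups of `S`. -/
def blowupFam (S : RGraph r) : Set (RGraph r) := {G | IsBlowup S G}

/-- A family is clonable if it is closed under taking blowups. -/
def Clonable (𝔉 : Set (RGraph r)) : Prop :=
  ∀ F ∈ 𝔉, ∀ G : RGraph r, IsBlowup F G → G ∈ 𝔉

/-- `m(𝔉, n)`: maximum number of edges of an `n`-vertex member of `𝔉`. -/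
noncomputable def mFam (𝔉 : Set (RGraph r)) (n : ℕ) : ℕ :=
  sSup {k | ∃ F ∈ 𝔉, F.n = n ∧ F.edges.card = k}

/-- `m(𝔉) = lim_{n → ∞} m(𝔉, n)/n^r` (when the family is smooth). -/
noncomputable def mDen (𝔉 : Set (RGraph r)) : ℝ :=
  limUnder atTop fun n : ℕ => (mFam 𝔉 n : ℝ) / (n : ℝ) ^ r

/-- The edit distance `d_𝔥(F)` from `F` to the family `𝔥`. -/
noncomputable def distFam (𝔥 : Set (RGraph r)) (F : RGraph r) : ℝ :=
  sInf {x : ℝ | ∃ H ∈ 𝔥, H.n = F.n ∧ x = ((symmDiff F.edges H.edges).card : ℝ)}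

/-- `μ` is a probability distribution on the vertex set of `F`. -/
def IsWeight (F : RGraph r) (μ : ℕ → ℝ) : Prop :=
  (∀ v, 0 ≤ μ v) ∧ (∀ v, F.n ≤ v → μ v = 0) ∧ ∑ v ∈ Finset.range F.n, μ v = 1

/-- Weighted density `λ(F, μ)`. -/
noncomputable def lamW (F : RGraph r) (μ : ℕ → ℝ) : ℝ :=
  ∑ e ∈ F.edges, ∏ v ∈ e, μ v

/-- The Lagrangian `λ(F)`. -/
noncomputable def lagrangian (F : RGraph r) : ℝ :=
  sSup {x : ℝ | ∃ μ, IsWeight F μ ∧ x = lamW F μ}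

/-- `λ(𝔥)` for a family of r-graphs. -/
noncomputable def lamFam (𝔥 : Set (RGraph r)) : ℝ :=
  sSup {x : ℝ | ∃ H ∈ 𝔥, ∃ μ, IsWeight H μ ∧ x = lamW H μ}

/-- The uniform distribution `ξ_F`. -/
noncomputable def uniformW (F : RGraph r) : ℕ → ℝ :=
  fun v => if v < F.n then ((F.n : ℝ))⁻¹ else 0

/-- `(G, ν)` is a blowup of the weighted graph `(F, μ)`. -/
def WIsBlowup (F : RGraph r) (μ : ℕ → ℝ) (G : RGraph r) (ν : ℕ → ℝ) : Prop :=
  IsWeight G ν ∧ ∃ φ : ℕ → ℕ, IsBlowupMap F G φ ∧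
    ∀ i < F.n, μ i = ∑ v ∈ (Finset.range G.n).filter (fun v => φ v = i), ν v

/-- `d'(F1, F2, μ)` for graphs on a common vertex set. -/
noncomputable def dPrime (E1 E2 : Finset (Finset ℕ)) (μ : ℕ → ℝ) : ℝ :=
  ∑ e ∈ symmDiff E1 E2, ∏ v ∈ e, μ v

/-- The distance between weighted `r`-graphs. -/
noncomputable def wDist (F1 : RGraph r) (μ1 : ℕ → ℝ) (F2 : RGraph r) (μ2 : ℕ → ℝ) : ℝ :=
  sInf {x : ℝ | ∃ (G1 G2 : RGraph r) (ν : ℕ → ℝ), G1.n = G2.n ∧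
    WIsBlowup F1 μ1 G1 ν ∧ WIsBlowup F2 μ2 G2 ν ∧ x = dPrime G1.edges G2.edges ν}

/-- The weighted distance `d^w_𝔥(F, μ)` from a weighted graph to a family. -/
noncomputable def wDistFam (𝔥 : Set (RGraph r)) (F : RGraph r) (μ : ℕ → ℝ) : ℝ :=
  sInf {x : ℝ | ∃ H ∈ 𝔥, ∃ ν, IsWeight H ν ∧ x = wDist F μ H ν}

/-- `𝔉` is `(𝔥, ε, α)`-locally stable. -/
def LocallyStable (𝔉 𝔥 : Set (RGraph r)) (ε α : ℝ) : Prop :=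
  ∃ n0 : ℕ, ∀ F ∈ 𝔉, n0 ≤ F.n → distFam 𝔥 F ≤ ε * (F.n : ℝ) ^ r →
    (F.edges.card : ℝ) ≤ (mFam 𝔥 F.n : ℝ) - α * distFam 𝔥 F

/-- `𝔉` is `𝔥`-locally stable. -/
def HLocallyStable (𝔉 𝔥 : Set (RGraph r)) : Prop :=
  ∃ ε > (0 : ℝ), ∃ α > (0 : ℝ), LocallyStable 𝔉 𝔥 ε α

/-- `𝔉` is `𝔥`-stable, i.e. `(𝔥, 1, α)`-locally stable for some `α > 0`. -/
def HStable (𝔉 𝔥 : Set (RGraph r)) : Prop :=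
  ∃ α > (0 : ℝ), LocallyStable 𝔉 𝔥 1 α

/-- `𝔉` is `(𝔥, ε, α)`-vertex locally stable. -/
def VertexLocallyStable (𝔉 𝔥 : Set (RGraph r)) (ε α : ℝ) : Prop :=
  ∃ n0 : ℕ, ∀ F ∈ 𝔉, n0 ≤ F.n → distFam 𝔥 F ≤ ε * (F.n : ℝ) ^ r →
    (∀ v < F.n, ((r : ℝ) * mDen 𝔥 - ε) * (F.n : ℝ) ^ (r - 1) ≤ ((link F v).card : ℝ)) →
    (F.edges.card : ℝ) ≤ (mFam 𝔥 F.n : ℝ) - α * distFam 𝔥 F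

/-- `𝔉` is `𝔥`-vertex locally stable. -/
def HVertexLocallyStable (𝔉 𝔥 : Set (RGraph r)) : Prop :=
  ∃ ε > (0 : ℝ), ∃ α > (0 : ℝ), VertexLocallyStable 𝔉 𝔥 ε α

/-- `𝔉` is `(𝔥, ε, α)`-weight locally stable. -/
def WeightLocallyStable (𝔉 𝔥 : Set (RGraph r)) (ε α : ℝ) : Prop :=
  ∀ F ∈ 𝔉, ∀ μ : ℕ → ℝ, IsWeight F μ → wDistFam 𝔥 F μ ≤ ε →
    lamW F μ ≤ lamFam 𝔥 - α * wDistFam 𝔥 F μ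

/-- `𝔉` is `𝔥`-weight locally stable. -/
def HWeightLocallyStable (𝔉 𝔥 : Set (RGraph r)) : Prop :=
  ∃ ε > (0 : ℝ), ∃ α > (0 : ℝ), WeightLocallyStable 𝔉 𝔥 ε α

/-- `𝔉` is `𝔥`-weight stable: `(𝔥, 1, α)`-weight locally stable for some `α > 0`. -/
def HWeightStable (𝔉 𝔥 : Set (RGraph r)) : Prop :=
  ∃ α > (0 : ℝ), WeightLocallyStable 𝔉 𝔥 1 α

/-- `𝔉` is `𝔥`-weakly weight stable. -/
def WeaklyWeightStable (𝔉 𝔥 : Set (RGraph r)) : Prop :=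
  ∀ ε > (0 : ℝ), ∃ δ > (0 : ℝ), ∀ F ∈ 𝔉, ∀ μ : ℕ → ℝ, IsWeight F μ →
    lamFam 𝔥 - δ ≤ lamW F μ → wDistFam 𝔥 F μ ≤ ε

/-- The generalized triangle `T_r` on vertex set `{0, ..., 2r-2}` (for `r ≥ 2`),
with edges `D1 = {0,...,r-1}`, `D2 = {0,...,r-2} ∪ {r}`, `D3 = {r-1, r, ..., 2r-2}`. -/
def genTriangle (r : ℕ) : RGraph r where
  n := 2 * r - 1
  edges :=
    if _h : 2 ≤ r then
      {Finset.range r, insert r (Finset.range (r - 1)), Finset.Ico (r - 1) (2 * r - 1)}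
    else ∅
  uniform := by
    intro e he
    split_ifs at he with h
    · simp only [Finset.mem_insert, Finset.mem_singleton] at he
      rcases he with rfl | rfl | rfl
      · exact Finset.card_range r
      · rw [Finset.card_insert_of_notMem (by simp only [Finset.mem_range]; omega),
          Finset.card_range]
        omega
      · rw [Nat.card_Ico]
        omega
    · simp at he
  valid := by
    intro e he v hv
    split_ifs at he with h
    · simp only [Finset.mem_insert, Finset.mem_singleton] at he
      rcases he with rfl | rfl | rfl
      · simp only [Finset.mem_range] at hv; omega
      · simp only [Finset.mem_insert, Finset.mem_range] at hv; omega
      · simp only [Finset.mem_Ico] at hv; omega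
    · simp at he

/-- The family `Σ_r`: all `r`-graphs with three edges `D1, D2, D3` such that
`|D1 ∩ D2| = r - 1` and `D1 △ D2 ⊆ D3`. -/
def SigmaFam (r : ℕ) : Set (RGraph r) :=
  {G | ∃ D1 D2 D3 : Finset ℕ, G.edges = {D1, D2, D3} ∧
    D1 ≠ D2 ∧ D1 ≠ D3 ∧ D2 ≠ D3 ∧
    (D1 ∩ D2).card = r - 1 ∧ symmDiff D1 D2 ⊆ D3}

/-- The complete graph `K_t` as a `2`-graph. -/
def completeGraph (t : ℕ) : RGraph 2 where
  n := t
  edges := Finset.powersetCard 2 (Finset.range t)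
  uniform := fun _e he => (Finset.mem_powersetCard.1 he).2
  valid := fun _e he v hv => Finset.mem_range.1 ((Finset.mem_powersetCard.1 he).1 hv)

/-- `S` is an `(m, r, r-1)` Steiner system: each `(r-1)`-subset of the vertex set
lies in exactly one edge. -/
def IsSteiner (m : ℕ) (S : RGraph r) : Prop :=
  S.n = m ∧ ∀ I : Finset ℕ, (∀ v ∈ I, v < S.n) → I.card = r - 1 →
    ∃! e, e ∈ S.edges ∧ I ⊆ e

/-- `F` covers pairs: every two vertices lie in a common edge. -/
def CoversPairs (F : RGraph r) : Prop :=
  ∀ u < F.n, ∀ v < F.n, ∃ e ∈ F.edges, u ∈ e ∧ v ∈ e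

/-- Isomorphism of `r`-graphs. -/
def Isomorphic (F G : RGraph r) : Prop :=
  F.n = G.n ∧ ∃ f : ℕ → ℕ, Set.InjOn f (Set.Iio F.n) ∧ (∀ v < F.n, f v < G.n) ∧
    ∀ e : Finset ℕ, e ∈ F.edges ↔ ((∀ v ∈ e, v < F.n) ∧ e.image f ∈ G.edges)

/-- The support of a weighting. -/
noncomputable def suppW (F : RGraph r) (μ : ℕ → ℝ) : Finset ℕ :=
  (Finset.range F.n).filter fun v => μ v ≠ 0

/-- `G` is isomorphic to the subgraph of `F` induced on the vertex set `S`. -/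
def IsIsoInduced (F : RGraph r) (S : Finset ℕ) (G : RGraph r) : Prop :=
  ∃ f : ℕ → ℕ, Set.InjOn f (Set.Iio G.n) ∧ (Finset.range G.n).image f = S ∧
    ∀ e : Finset ℕ, e ∈ G.edges ↔ ((∀ v ∈ e, v < G.n) ∧ e.image f ∈ F.edges)

/-- An `r`-graph is thin if every `(r-1)`-set lies in at most one edge. -/
def ThinG (F : RGraph r) : Prop :=
  ∀ I : Finset ℕ, I.card = r - 1 → ∀ e1 ∈ F.edges, ∀ e2 ∈ F.edges,
    I ⊆ e1 → I ⊆ e2 → e1 = e2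

/-- A Steiner system (or any graph) is balanced if its Lagrangian is attained by
the uniform distribution. -/
def Balanced (F : RGraph r) : Prop := lagrangian F = lamW F (uniformW F)

/-- `e(m, r) = C(m, r-1) / (r m^r)`. -/
noncomputable def eDen (m r : ℕ) : ℝ :=
  (m.choose (r - 1) : ℝ) / ((r : ℝ) * (m : ℝ) ^ r)

/-- `d(m, r) = C(m-1, r-2) / ((r-1) m^{r-1})`. -/
noncomputable def dDen (m r : ℕ) : ℝ :=
  ((m - 1).choose (r - 2) : ℝ) / (((r : ℝ) - 1) * (m : ℝ) ^ (r - 1))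

/-- `S` is uniquely dense around `Σ_r`: the uniform weighting of `S` strictly maximizes the
weighted density among weighted `Σ_r`-free `r`-graphs covering pairs. -/
def UniquelyDense (S : RGraph r) : Prop :=
  (∀ F : RGraph r, FreeFam (SigmaFam r) F → CoversPairs F → ∀ μ : ℕ → ℝ, IsWeight F μ →
    lamW F μ ≤ lamW S (uniformW S)) ∧
  ∀ F : RGraph r, FreeFam (SigmaFam r) F → CoversPairs F → ∀ μ : ℕ → ℝ, IsWeight F μ →
    lamW F μ = lamW S (uniformW S) → Isomorphic F S ∧ μ = uniformW F

section ESHelpers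
open Finset
def nbr (F : RGraph 2) (B : Finset ℕ) (v : ℕ) : Finset ℕ :=
  B.filter (fun u => ({v, u} : Finset ℕ) ∈ F.edges)

/-- edges inside B -/
def ein (F : RGraph 2) (B : Finset ℕ) : Finset (Finset ℕ) :=
  F.edges.filter (fun e => e ⊆ B)

lemma no_loop (F : RGraph 2) (v : ℕ) : ({v, v} : Finset ℕ) ∉ F.edges := by
  intro h
  have := F.uniform _ h
  simp at this

lemma not_mem_nbr_self (F : RGraph 2) (B : Finset ℕ) (v : ℕ) : v ∉ nbr F B v := by
  simp only [nbr, mem_filter, not_and]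
  intro _
  exact no_loop F v

lemma pair_subset {a b : ℕ} {S : Finset ℕ} : ({a, b} : Finset ℕ) ⊆ S ↔ a ∈ S ∧ b ∈ S := by
  simp [Finset.insert_subset_iff]

/-- degree as edge count -/
lemma nbr_card_eq (F : RGraph 2) (B : Finset ℕ) (v : ℕ) (hv : v ∈ B) :
    (nbr F B v).card = ((ein F B).filter (fun e => v ∈ e)).card := by
  apply Finset.card_bij (fun u _ => ({v, u} : Finset ℕ))
  · intro u hu
    simp only [nbr, mem_filter] at hu
    simp only [ein, mem_filter]
    exact ⟨⟨hu.2, pair_subset.mpr ⟨hv, hu.1⟩⟩, by simp⟩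
  · intro u1 h1 u2 h2 he
    have hu1 : u1 ≠ v := fun h => not_mem_nbr_self F B v (h ▸ h1)
    have : u1 ∈ ({v, u2} : Finset ℕ) := he ▸ (by simp : u1 ∈ ({v, u1} : Finset ℕ))
    simp only [mem_insert, mem_singleton] at this
    tauto
  · intro e he
    simp only [ein, mem_filter] at he
    obtain ⟨⟨he1, he2⟩, hve⟩ := he
    obtain ⟨a, b, hab, rfl⟩ := Finset.card_eq_two.mp (F.uniform _ he1)
    simp only [mem_insert, mem_singleton] at hve
    rcases hve with rfl | rfl
    · exact ⟨b, by simp [nbr, mem_filter, he2 (by simp : b ∈ ({v,b}:Finset ℕ)), he1], rfl⟩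
    · refine ⟨a, ?_, by rw [Finset.pair_comm]⟩
      simp only [nbr, mem_filter]
      exact ⟨he2 (by simp), by rwa [Finset.pair_comm]⟩

lemma sum_nbr_eq (F : RGraph 2) (B V : Finset ℕ) (hVB : V ⊆ B) :
    ∑ v ∈ V, (nbr F B v).card = ∑ e ∈ ein F B, (V.filter (fun v => v ∈ e)).card := by
  have : ∀ v ∈ V, (nbr F B v).card = ∑ e ∈ ein F B, if v ∈ e then 1 else 0 := by
    intro v hv
    rw [nbr_card_eq F B v (hVB hv), Finset.card_filter]
  rw [Finset.sum_congr rfl this, Finset.sum_comm]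
  exact Finset.sum_congr rfl (fun e _ => (Finset.card_filter _ _).symm)



-- three-way split of a sum over a family of nonempty subsets of V ∪ W, V, W disjoint
lemma split3sum (V W : Finset ℕ) (hd : Disjoint V W) (E : Finset (Finset ℕ))
    (hE : ∀ e ∈ E, e.Nonempty) (f : Finset ℕ → ℕ) :
    ∑ e ∈ E, f e = ∑ e ∈ E.filter (fun e => e ⊆ V), f e
      + ∑ e ∈ E.filter (fun e => e ⊆ W), f e
      + ∑ e ∈ E.filter (fun e => ¬ e ⊆ V ∧ ¬ e ⊆ W), f e := by
  have e1 : ∑ e ∈ E, f e = ∑ e ∈ E.filter (fun e => e ⊆ V), f e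
      + ∑ e ∈ E.filter (fun e => ¬ e ⊆ V), f e :=
    (Finset.sum_filter_add_sum_filter_not E (fun e => e ⊆ V) f).symm
  have e2 : ∑ e ∈ E.filter (fun e => ¬ e ⊆ V), f e
      = ∑ e ∈ (E.filter (fun e => ¬ e ⊆ V)).filter (fun e => e ⊆ W), f e
      + ∑ e ∈ (E.filter (fun e => ¬ e ⊆ V)).filter (fun e => ¬ e ⊆ W), f e :=
    (Finset.sum_filter_add_sum_filter_not _ (fun e => e ⊆ W) f).symm
  have e3 : (E.filter (fun e => ¬ e ⊆ V)).filter (fun e => e ⊆ W)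
      = E.filter (fun e => e ⊆ W) := by
    rw [Finset.filter_filter]
    apply Finset.filter_congr
    intro e he
    simp only [and_iff_right_iff_imp]
    intro hw hv
    obtain ⟨x, hx⟩ := hE e he
    exact (Finset.disjoint_left.mp hd) (hv hx) (hw hx)
  have e4 : (E.filter (fun e => ¬ e ⊆ V)).filter (fun e => ¬ e ⊆ W)
      = E.filter (fun e => ¬ e ⊆ V ∧ ¬ e ⊆ W) := by
    rw [Finset.filter_filter]
  rw [e1, e2, e3, e4]; ring

lemma split3card (V W : Finset ℕ) (hd : Disjoint V W) (E : Finset (Finset ℕ))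
    (hE : ∀ e ∈ E, e.Nonempty) :
    E.card = (E.filter (fun e => e ⊆ V)).card + (E.filter (fun e => e ⊆ W)).card
      + (E.filter (fun e => ¬ e ⊆ V ∧ ¬ e ⊆ W)).card := by
  rw [Finset.card_eq_sum_ones E, Finset.card_eq_sum_ones, Finset.card_eq_sum_ones,
    Finset.card_eq_sum_ones]
  exact split3sum V W hd E hE (fun _ => 1)

-- a cross 2-set decomposes
lemma cross_decomp (V W : Finset ℕ) (hd : Disjoint V W) (e : Finset ℕ) (hc : e.card = 2)
    (hsub : e ⊆ V ∪ W) (h1 : ¬ e ⊆ V) (h2 : ¬ e ⊆ W) :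
    ∃ a b, a ∈ V ∧ b ∈ W ∧ e = {a, b} := by
  obtain ⟨a, b, hab, rfl⟩ := Finset.card_eq_two.mp hc
  have ha := hsub (by simp : a ∈ ({a,b} : Finset ℕ))
  have hb := hsub (by simp : b ∈ ({a,b} : Finset ℕ))
  simp only [mem_union] at ha hb
  have insV : ∀ (S : Finset ℕ) (x y : ℕ), x ∈ S → y ∈ S → ¬ (({x,y}:Finset ℕ) ⊆ S) → False := by
    intro S x y hx hy h
    exact h (by intro z hz; simp only [mem_insert, mem_singleton] at hz; rcases hz with rfl|rfl <;> assumption)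
  rcases ha with ha | ha <;> rcases hb with hb | hb
  · exact (insV V a b ha hb h1).elim
  · exact ⟨a, b, ha, hb, rfl⟩
  · exact ⟨b, a, hb, ha, Finset.pair_comm a b⟩
  · exact (insV W a b ha hb h2).elim



lemma crosspairs_card (V W : Finset ℕ) (hd : Disjoint V W) :
    ((Finset.powersetCard 2 (V ∪ W)).filter (fun e => ¬ e ⊆ V ∧ ¬ e ⊆ W)).card
      = V.card * W.card := by
  rw [← Finset.card_product]
  symm
  apply Finset.card_bij (fun (p : ℕ × ℕ) _ => ({p.1, p.2} : Finset ℕ))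
  · rintro ⟨a, b⟩ hp
    simp only [Finset.mem_product] at hp
    obtain ⟨ha, hb⟩ := hp
    have hab : a ≠ b := fun h => Finset.disjoint_left.mp hd ha (h ▸ hb)
    simp only [mem_filter, Finset.mem_powersetCard]
    refine ⟨⟨?_, Finset.card_pair hab⟩, ?_, ?_⟩
    · intro z hz; simp only [mem_insert, mem_singleton] at hz
      rcases hz with rfl | rfl
      · exact Finset.mem_union_left _ ha
      · exact Finset.mem_union_right _ hb
    · intro h; exact Finset.disjoint_left.mp hd (h (by simp)) hb
    · intro h; exact Finset.disjoint_left.mp hd ha (h (by simp))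
  · rintro ⟨a1, b1⟩ h1 ⟨a2, b2⟩ h2 he
    simp only [Finset.mem_product] at h1 h2
    have ha1 : a1 ∈ ({a2, b2} : Finset ℕ) := he ▸ (by simp)
    have hb1 : b1 ∈ ({a2, b2} : Finset ℕ) := he ▸ (by simp)
    simp only [mem_insert, mem_singleton] at ha1 hb1
    have e1 : a1 = a2 := by
      rcases ha1 with h | h
      · exact h
      · exact absurd (h ▸ h1.1) (fun hh => Finset.disjoint_left.mp hd hh h2.2)
    have e2 : b1 = b2 := by
      rcases hb1 with h | h
      · exact absurd (h ▸ h1.2) (fun hh => Finset.disjoint_left.mp hd h2.1 hh)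
      · exact h
    simp [e1, e2]
  · intro e he
    simp only [mem_filter, Finset.mem_powersetCard] at he
    obtain ⟨⟨hsub, hc⟩, h1, h2⟩ := he
    obtain ⟨a, b, hab, rfl⟩ := Finset.card_eq_two.mp hc
    have ha := hsub (by simp : a ∈ ({a,b} : Finset ℕ))
    have hb := hsub (by simp : b ∈ ({a,b} : Finset ℕ))
    simp only [mem_union] at ha hb
    have insS : ∀ (S : Finset ℕ) (x y : ℕ), x ∈ S → y ∈ S → (({x,y}:Finset ℕ) ⊆ S) := by
      intro S x y hx hy z hz
      simp only [mem_insert, mem_singleton] at hz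
      rcases hz with rfl | rfl <;> assumption
    rcases ha with ha | ha <;> rcases hb with hb | hb
    · exact (h1 (insS V a b ha hb)).elim
    · exact ⟨⟨a, b⟩, Finset.mem_product.mpr ⟨ha, hb⟩, rfl⟩
    · exact ⟨⟨b, a⟩, Finset.mem_product.mpr ⟨hb, ha⟩, (Finset.pair_comm a b).symm⟩
    · exact (h2 (insS W a b ha hb)).elim



lemma greedy (F : RGraph 2) (B : Finset ℕ) :
    ∃ (s : ℕ) (c : ℕ → ℕ) (xs : List ℕ),
      xs.length = s ∧ xs.Nodup ∧ (∀ v ∈ xs, v ∈ B) ∧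
      List.Pairwise (fun a b => ({a, b} : Finset ℕ) ∈ F.edges) xs ∧
      (∀ v ∈ B, c v < s) ∧
      (ein F B).card + ((ein F B).filter (fun e => ¬ (e.image c).card = 2)).card
        ≤ ((Finset.powersetCard 2 B).filter (fun e => (e.image c).card = 2)).card := by
  induction B using Finset.strongInductionOn with
  | _ B ih =>
  rcases B.eq_empty_or_nonempty with rfl | hB
  · refine ⟨0, fun _ => 0, [], rfl, by simp, by simp, by simp, by simp, ?_⟩
    have h1 : ein F ∅ = ∅ := by
      ext e
      simp only [ein, mem_filter, Finset.subset_empty, Finset.notMem_empty, iff_false, not_and]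
      rintro he rfl
      have := F.uniform _ he; simp at this
    simp [h1]
  · obtain ⟨x, hxB, hmax⟩ := B.exists_max_image (fun v => (nbr F B v).card) hB
    set W := nbr F B x with hWdef
    have hWB : W ⊆ B := Finset.filter_subset _ _
    have hxW : x ∉ W := not_mem_nbr_self F B x
    set V := B \ W with hVdef
    have hVB : V ⊆ B := Finset.sdiff_subset
    have hxV : x ∈ V := Finset.mem_sdiff.mpr ⟨hxB, hxW⟩
    have hdisj : Disjoint V W := Finset.sdiff_disjoint
    have hunion : V ∪ W = B := Finset.sdiff_union_of_subset hWB
    have hWlt : W ⊂ B := ⟨hWB, fun h => hxW (h hxB)⟩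
    obtain ⟨s', c', xs', hlen, hnd, hmem, hpw, hcol, hineq⟩ := ih W hWlt
    set c : ℕ → ℕ := fun v => if v ∈ W then c' v else s' with hcdef
    have cV : ∀ v ∈ V, c v = s' := by
      intro v hv
      simp only [hcdef, if_neg (Finset.disjoint_left.mp hdisj hv)]
    have cW : ∀ v ∈ W, c v = c' v := fun v hv => by simp only [hcdef, if_pos hv]
    refine ⟨s' + 1, c, x :: xs', by simp [hlen], ?_, ?_, ?_, ?_, ?_⟩
    · exact List.nodup_cons.mpr ⟨fun h => hxW (hmem x h), hnd⟩
    · intro v hv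
      rcases List.mem_cons.mp hv with rfl | hv
      · exact hxB
      · exact hWB (hmem v hv)
    · refine List.pairwise_cons.mpr ⟨?_, hpw⟩
      intro b hb
      have := hmem b hb
      rw [hWdef, nbr, mem_filter] at this
      exact this.2
    · intro v hv
      by_cases h : v ∈ W
      · have := hcol v h
        simp only [hcdef, if_pos h]
        omega
      · simp only [hcdef, if_neg h]
        omega
    -- the inequality
    · have card2ein : ∀ e ∈ ein F B, e.card = 2 := by
        intro e he
        exact F.uniform e (mem_filter.mp he).1
      have subein : ∀ e ∈ ein F B, e ⊆ V ∪ W := by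
        intro e he
        rw [hunion]
        exact (mem_filter.mp he).2
      have neein : ∀ e ∈ ein F B, e.Nonempty := by
        intro e he
        rw [← Finset.card_pos, card2ein e he]; omega
      -- filters of ein B
      have hfV : (ein F B).filter (fun e => e ⊆ V) = ein F V := by
        ext e
        simp only [ein, mem_filter, and_assoc]
        constructor
        · rintro ⟨h1, _, h3⟩; exact ⟨h1, h3⟩
        · rintro ⟨h1, h3⟩; exact ⟨h1, h3.trans hVB, h3⟩
      have hfW : (ein F B).filter (fun e => e ⊆ W) = ein F W := by
        ext e
        simp only [ein, mem_filter, and_assoc]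
        constructor
        · rintro ⟨h1, _, h3⟩; exact ⟨h1, h3⟩
        · rintro ⟨h1, h3⟩; exact ⟨h1, h3.trans hWB, h3⟩
      set X := (ein F B).filter (fun e => ¬ e ⊆ V ∧ ¬ e ⊆ W) with hXdef
      -- (A) edge count split
      have hA : (ein F B).card = (ein F V).card + (ein F W).card + X.card := by
        rw [← hfV, ← hfW]
        exact split3card V W hdisj _ neein
      -- (D) key: 2 * einV + X ≤ |V| * |W|
      have hD : 2 * (ein F V).card + X.card ≤ V.card * W.card := by
        have d2 : ∑ v ∈ V, (nbr F B v).card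
            = ∑ e ∈ ein F B, (V.filter (fun v => v ∈ e)).card := sum_nbr_eq F B V hVB
        have d3 : 2 * (ein F V).card + X.card
            ≤ ∑ e ∈ ein F B, (V.filter (fun v => v ∈ e)).card := by
          rw [split3sum V W hdisj (ein F B) neein (fun e => (V.filter (fun v => v ∈ e)).card),
            hfV, hfW, ← hXdef]
          have t1 : ∑ e ∈ ein F V, (V.filter (fun v => v ∈ e)).card = 2 * (ein F V).card := by
            rw [Finset.sum_congr rfl (g := fun _ => 2), Finset.sum_const, smul_eq_mul, mul_comm]
            intro e he
            have hsub : e ⊆ V := (mem_filter.mp he).2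
            have : V.filter (fun v => v ∈ e) = e := by
              ext v
              simp only [mem_filter]
              exact ⟨fun h => h.2, fun h => ⟨hsub h, h⟩⟩
            rw [this]
            exact F.uniform e (mem_filter.mp he).1
          have t2 : ∑ e ∈ X, (V.filter (fun v => v ∈ e)).card = X.card := by
            rw [Finset.sum_congr rfl (g := fun _ => 1), Finset.sum_const, smul_eq_mul, mul_one]
            intro e he
            rw [hXdef, mem_filter] at he
            obtain ⟨heB, h1, h2⟩ := he
            obtain ⟨a, b, ha, hb, rfl⟩ := cross_decomp V W hdisj e (card2ein e heB)
              (subein e heB) h1 h2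
            have : V.filter (fun v => v ∈ ({a, b} : Finset ℕ)) = {a} := by
              ext v
              simp only [mem_filter, mem_insert, mem_singleton]
              constructor
              · rintro ⟨hv, rfl | rfl⟩
                · rfl
                · exact absurd hv (Finset.disjoint_right.mp hdisj hb)
              · rintro rfl; exact ⟨ha, Or.inl rfl⟩
            rw [this, Finset.card_singleton]
          omega
        have d4 : ∑ v ∈ V, (nbr F B v).card ≤ V.card * W.card := by
          calc ∑ v ∈ V, (nbr F B v).card ≤ ∑ _v ∈ V, W.card := by
                apply Finset.sum_le_sum
                intro v hv
                exact hmax v (hVB hv)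
            _ = V.card * W.card := by rw [Finset.sum_const, smul_eq_mul]
        omega
      -- (B) mono split
      have hB2 : ((ein F B).filter (fun e => ¬ (e.image c).card = 2)).card
          = (ein F V).card + ((ein F W).filter (fun e => ¬ (e.image c').card = 2)).card := by
        set E := (ein F B).filter (fun e => ¬ (e.image c).card = 2) with hEdef
        have hEsub : E ⊆ ein F B := Finset.filter_subset _ _
        have p1 : E.filter (fun e => e ⊆ V) = ein F V := by
          ext e
          constructor
          · intro h
            obtain ⟨hE, hVs⟩ := mem_filter.mp h
            have hedges : e ∈ F.edges := (mem_filter.mp ((mem_filter.mp hE).1)).1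
            exact mem_filter.mpr ⟨hedges, hVs⟩
          · intro h
            obtain ⟨hedges, heV⟩ := mem_filter.mp h
            refine mem_filter.mpr ⟨mem_filter.mpr ⟨mem_filter.mpr ⟨hedges, heV.trans hVB⟩, ?_⟩, heV⟩
            have : e.image c ⊆ {s'} := by
              intro y hy
              obtain ⟨v, hv, rfl⟩ := Finset.mem_image.mp hy
              simp only [mem_singleton]
              exact cV v (heV hv)
            have := Finset.card_le_card this
            simp only [Finset.card_singleton] at this
            omega
        have p2 : E.filter (fun e => e ⊆ W)
            = (ein F W).filter (fun e => ¬ (e.image c').card = 2) := by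
          ext e
          simp only [hEdef, ein, mem_filter, and_assoc]
          constructor
          · rintro ⟨h1, _, h3, h4⟩
            refine ⟨h1, h4, ?_⟩
            rwa [Finset.image_congr (fun v hv => cW v (h4 hv))] at h3
          · rintro ⟨h1, h2, h3⟩
            refine ⟨h1, h2.trans hWB, ?_, h2⟩
            rwa [Finset.image_congr (fun v hv => cW v (h2 hv))]
        have p3 : E.filter (fun e => ¬ e ⊆ V ∧ ¬ e ⊆ W) = ∅ := by
          ext e
          simp only [hEdef, mem_filter, Finset.notMem_empty, iff_false, and_assoc, not_and]
          intro h1 h2 h3 h4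
          obtain ⟨a, b, ha, hb, rfl⟩ := cross_decomp V W hdisj e
            (card2ein e h1) (subein e h1) h3 h4
          apply h2
          have hImg : ({a, b} : Finset ℕ).image c = {c a, c b} := by
            simp [Finset.image_insert]
          rw [hImg]
          apply Finset.card_pair
          rw [cV a ha, cW b hb]
          exact fun h => absurd (h ▸ (hcol b hb)) (lt_irrefl s')
        have := split3card V W hdisj E (fun e he => neein e (hEsub he))
        rw [p1, p2, p3] at this
        simp only [Finset.card_empty] at this
        omega
      -- (C) bic split
      have hC : ((Finset.powersetCard 2 B).filter (fun e => (e.image c).card = 2)).card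
          = V.card * W.card
            + ((Finset.powersetCard 2 W).filter (fun e => (e.image c').card = 2)).card := by
        set E := (Finset.powersetCard 2 B).filter (fun e => (e.image c).card = 2) with hEdef
        have hEne : ∀ e ∈ E, e.Nonempty := by
          intro e he
          have := (Finset.mem_powersetCard.mp (mem_filter.mp he).1).2
          rw [← Finset.card_pos, this]; omega
        have q1 : E.filter (fun e => e ⊆ V) = ∅ := by
          ext e
          simp only [hEdef, mem_filter, Finset.mem_powersetCard, Finset.notMem_empty, iff_false,
            and_assoc, not_and]
          intro _ _ h3 h4
          have : e.image c ⊆ {s'} := by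
            intro y hy
            obtain ⟨v, hv, rfl⟩ := Finset.mem_image.mp hy
            simp only [mem_singleton]
            exact cV v (h4 hv)
          have := Finset.card_le_card this
          simp only [Finset.card_singleton] at this
          omega
        have q2 : E.filter (fun e => e ⊆ W)
            = (Finset.powersetCard 2 W).filter (fun e => (e.image c').card = 2) := by
          ext e
          simp only [hEdef, mem_filter, Finset.mem_powersetCard, and_assoc]
          constructor
          · rintro ⟨_, h2, h3, h4⟩
            refine ⟨h4, h2, ?_⟩
            rwa [Finset.image_congr (fun v hv => cW v (h4 hv))] at h3
          · rintro ⟨h1, h2, h3⟩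
            refine ⟨h1.trans hWB, h2, ?_, h1⟩
            rwa [Finset.image_congr (fun v hv => cW v (h1 hv))]
        have q3 : E.filter (fun e => ¬ e ⊆ V ∧ ¬ e ⊆ W)
            = (Finset.powersetCard 2 (V ∪ W)).filter (fun e => ¬ e ⊆ V ∧ ¬ e ⊆ W) := by
          ext e
          simp only [hEdef, mem_filter, Finset.mem_powersetCard, hunion, and_assoc]
          constructor
          · rintro ⟨h1, h2, _, h4, h5⟩
            exact ⟨h1, h2, h4, h5⟩
          · rintro ⟨h1, h2, h4, h5⟩
            refine ⟨h1, h2, ?_, h4, h5⟩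
            obtain ⟨a, b, ha, hb, rfl⟩ := cross_decomp V W hdisj e h2
              (by rw [hunion]; exact h1) h4 h5
            have hImg : ({a, b} : Finset ℕ).image c = {c a, c b} := by
              simp [Finset.image_insert]
            rw [hImg]
            apply Finset.card_pair
            rw [cV a ha, cW b hb]
            exact fun h => absurd (h ▸ (hcol b hb)) (lt_irrefl s')
        have := split3card V W hdisj E hEne
        rw [q1, q2, q3, crosspairs_card V W hdisj] at this
        simp only [Finset.card_empty] at this
        omega
      have hcsub : ∀ e : Finset ℕ, e ⊆ W →
          ((e.image c).card = 2 ↔ (e.image c').card = 2) := by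
        intro e hsub
        rw [Finset.image_congr (fun v hv => cW v (hsub hv))]
      rw [hA, hB2, hC]
      omega


lemma clique_copy (F : RGraph 2) (t : ℕ) (xs : List ℕ) (hnd : xs.Nodup)
    (hmem : ∀ v ∈ xs, v < F.n)
    (hpw : List.Pairwise (fun a b => ({a, b} : Finset ℕ) ∈ F.edges) xs)
    (hlen : t ≤ xs.length) : ContainsCopy F (completeGraph t) := by
  refine ⟨fun i => xs.getD i 0, ?_, ?_, ?_⟩
  · intro i hi j hj hij
    simp only [Set.mem_Iio] at hi hj
    have hi' : i < xs.length := lt_of_lt_of_le hi hlen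
    have hj' : j < xs.length := lt_of_lt_of_le hj hlen
    have hij' : xs.getD i 0 = xs.getD j 0 := hij
    rw [List.getD_eq_getElem xs 0 hi', List.getD_eq_getElem xs 0 hj'] at hij'
    exact Fin.mk_eq_mk.mp ((List.Nodup.get_inj_iff hnd).mp hij')
  · intro v hv
    have hv' : v < xs.length := lt_of_lt_of_le hv hlen
    show xs.getD v 0 < F.n
    rw [List.getD_eq_getElem xs 0 hv']
    exact hmem _ (List.getElem_mem hv')
  · intro e he
    simp only [completeGraph, Finset.mem_powersetCard] at he
    obtain ⟨hsub, hc⟩ := he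
    obtain ⟨i, j, hij, rfl⟩ := Finset.card_eq_two.mp hc
    have hi : i < xs.length :=
      lt_of_lt_of_le (Finset.mem_range.mp (hsub (by simp))) hlen
    have hj : j < xs.length :=
      lt_of_lt_of_le (Finset.mem_range.mp (hsub (by simp))) hlen
    have hadj : ∀ a b : Fin xs.length, (a : ℕ) < b → ({xs.get a, xs.get b} : Finset ℕ) ∈ F.edges := by
      intro a b hab
      exact List.pairwise_iff_get.mp hpw a b hab
    have himg : ({i, j} : Finset ℕ).image (fun i => xs.getD i 0) = {xs.getD i 0, xs.getD j 0} := by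
      simp [Finset.image_insert]
    rw [himg, List.getD_eq_getElem xs 0 hi, List.getD_eq_getElem xs 0 hj]
    rcases lt_or_gt_of_ne hij with h | h
    · exact hadj ⟨i, hi⟩ ⟨j, hj⟩ h
    · rw [Finset.pair_comm]
      exact hadj ⟨j, hj⟩ ⟨i, hi⟩ h


end ESHelpers

/-- Erdős–Simonovits stability: for `t ≥ 3`, `Forb(K_t)` is
`𝔅(K_{t-1})`-stable. -/
theorem erdos_simonovits_stability (t : ℕ) (ht : 3 ≤ t) :
    HStable {G : RGraph 2 | ¬ ContainsCopy G (completeGraph t)}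
      (blowupFam (completeGraph (t - 1))) := by
  refine ⟨1/3, by norm_num, 0, ?_⟩
  intro F hF _ _
  simp only [Set.mem_setOf_eq] at hF
  obtain ⟨s, c, xs, hlen, hnd, hmem, hpw, hcol, hineq⟩ := greedy F (Finset.range F.n)
  have hs : s ≤ t - 1 := by
    by_contra h
    exact hF (clique_copy F t xs hnd (fun v hv => Finset.mem_range.mp (hmem v hv)) hpw
      (by omega))
  -- the complete multipartite graph H
  set HE : Finset (Finset ℕ) :=
    (Finset.powersetCard 2 (Finset.range F.n)).filter (fun e => (e.image c).card = 2) with hHEdef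
  have hHEmem : ∀ e ∈ HE, (e ⊆ Finset.range F.n ∧ e.card = 2) ∧ (e.image c).card = 2 := by
    intro e he
    obtain ⟨h1, h2⟩ := Finset.mem_filter.mp he
    exact ⟨Finset.mem_powersetCard.mp h1, h2⟩
  set H : RGraph 2 := ⟨F.n, HE, fun e he => (hHEmem e he).1.2,
    fun e he v hv => Finset.mem_range.mp ((hHEmem e he).1.1 hv)⟩ with hHdef
  have hcolH : ∀ v < F.n, c v < t - 1 := by
    intro v hv
    have := hcol v (Finset.mem_range.mpr hv)
    omega
  have hHblow : H ∈ blowupFam (completeGraph (t - 1)) := by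
    refine ⟨c, hcolH, ?_⟩
    intro e
    constructor
    · intro he
      obtain ⟨⟨hsub, hc2⟩, hbi⟩ := hHEmem e he
      refine ⟨fun v hv => Finset.mem_range.mp (hsub hv), ?_, ?_⟩
      · exact Finset.injOn_of_card_image_eq (by rw [hbi, hc2])
      · simp only [completeGraph, Finset.mem_powersetCard]
        refine ⟨?_, hbi⟩
        intro y hy
        obtain ⟨v, hv, rfl⟩ := Finset.mem_image.mp hy
        exact Finset.mem_range.mpr (hcolH v (Finset.mem_range.mp (hsub hv)))
    · rintro ⟨hv, hinj, him⟩
      simp only [completeGraph, Finset.mem_powersetCard] at him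
      have hc2 : e.card = 2 := by
        rw [← Finset.card_image_of_injOn hinj, him.2]
      refine Finset.mem_filter.mpr ⟨?_, ?_⟩
      · exact Finset.mem_powersetCard.mpr ⟨fun v hvv => Finset.mem_range.mpr (hv v hvv), hc2⟩
      · rw [← him.2]
  -- edge identities
  have heinB : ein F (Finset.range F.n) = F.edges := by
    apply Finset.filter_true_of_mem
    intro e he v hv
    exact Finset.mem_range.mpr (F.valid e he v hv)
  set m := (F.edges.filter (fun e => ¬ (e.image c).card = 2)).card with hmdef
  have key : F.edges.card + m ≤ HE.card := by
    have k := hineq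
    rw [heinB] at k
    exact k
  have hFH : F.edges \ HE = F.edges.filter (fun e => ¬ (e.image c).card = 2) := by
    ext e
    simp only [Finset.mem_sdiff, Finset.mem_filter, hHEdef, Finset.mem_powersetCard]
    constructor
    · rintro ⟨he, hne⟩
      refine ⟨he, fun hbi => hne ⟨⟨?_, F.uniform e he⟩, hbi⟩⟩
      intro v hv
      exact Finset.mem_range.mpr (F.valid e he v hv)
    · rintro ⟨he, hne⟩
      exact ⟨he, fun h => hne h.2⟩
  have hsd : (symmDiff F.edges HE).card = (F.edges \ HE).card + (HE \ F.edges).card := by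
    have : symmDiff F.edges HE = (F.edges \ HE) ∪ (HE \ F.edges) := by
      ext x
      simp only [Finset.mem_symmDiff, Finset.mem_union, Finset.mem_sdiff]
    rw [this, Finset.card_union_of_disjoint disjoint_sdiff_sdiff]
  have i1 : (F.edges \ HE).card + (F.edges ∩ HE).card = F.edges.card :=
    Finset.card_sdiff_add_card_inter _ _
  have i2 : (HE \ F.edges).card + (HE ∩ F.edges).card = HE.card :=
    Finset.card_sdiff_add_card_inter _ _
  have i3 : (F.edges ∩ HE).card = (HE ∩ F.edges).card := by rw [Finset.inter_comm]
  have hFHm : (F.edges \ HE).card = m := by rw [hFH, hmdef]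
  have harith : 3 * F.edges.card + (symmDiff F.edges HE).card ≤ 3 * HE.card := by
    omega
  -- mFam bound
  have hmFam : HE.card ≤ mFam (blowupFam (completeGraph (t - 1))) F.n := by
    apply le_csSup
    · refine ⟨(Finset.powersetCard 2 (Finset.range F.n)).card, ?_⟩
      rintro k ⟨G, _, hGn, rfl⟩
      apply Finset.card_le_card
      intro e he
      refine Finset.mem_powersetCard.mpr ⟨?_, G.uniform e he⟩
      intro v hv
      exact Finset.mem_range.mpr (hGn ▸ G.valid e he v hv)
    · exact ⟨H, hHblow, rfl, rfl⟩
  -- distFam bound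
  have hdist : distFam (blowupFam (completeGraph (t - 1))) F
      ≤ ((symmDiff F.edges HE).card : ℝ) := by
    apply csInf_le
    · refine ⟨0, ?_⟩
      rintro x ⟨G, _, _, rfl⟩
      positivity
    · exact ⟨H, hHblow, rfl, rfl⟩
  have hdist0 : 0 ≤ distFam (blowupFam (completeGraph (t - 1))) F := by
    apply le_csInf
    · exact ⟨_, H, hHblow, rfl, rfl⟩
    · rintro x ⟨G, _, _, rfl⟩
      positivity
  have harithR : (3 : ℝ) * F.edges.card + ((symmDiff F.edges HE).card : ℝ)
      ≤ 3 * (mFam (blowupFam (completeGraph (t - 1))) F.n : ℝ) := by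
    have h1 : (3 * F.edges.card + (symmDiff F.edges HE).card : ℕ)
        ≤ (3 * HE.card : ℕ) := harith
    have h2 := hmFam
    push_cast
    calc (3 : ℝ) * F.edges.card + ((symmDiff F.edges HE).card : ℝ)
        ≤ 3 * (HE.card : ℝ) := by exact_mod_cast h1
      _ ≤ 3 * (mFam (blowupFam (completeGraph (t - 1))) F.n : ℝ) := by
          have : (HE.card : ℝ) ≤ (mFam (blowupFam (completeGraph (t - 1))) F.n : ℝ) :=
            Nat.cast_le.mpr h2
          linarith
  linarith


end TuranGT
end

section
/- For every integer t ≥ 3 there exist ε>0 and n0 such that the following holds: if G is a K_t-free graph on n ≥ n0 vertices with d_{𝔅(K_{t-1})}(G) ≤ ε n² and minimum degree at least ((t−2)/(t−1) − ε)·n, then G is (t−1)-partite, i.e., G is a subgraph of some complete multipartite graph on V(G) with t−1 parts. -/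
open Filter

namespace TuranGT

variable {r : ℕ}

/-! ### Auxiliary development for Statement 13 -/

/-- Adjacency in a 2-graph. -/
def adjG (G : RGraph 2) (u v : ℕ) : Prop := ({u, v} : Finset ℕ) ∈ G.edges

/-- The neighborhood of a vertex as a set of vertices. -/
def nbrG (G : RGraph 2) (v : ℕ) : Finset ℕ :=
  (Finset.range G.n).filter fun u => ({v, u} : Finset ℕ) ∈ G.edges

lemma adjG_symm {G : RGraph 2} {u v : ℕ} (h : adjG G u v) : adjG G v u := by
  unfold adjG at *; rwa [Finset.pair_comm]

lemma adjG_irrefl {G : RGraph 2} (v : ℕ) : ¬ adjG G v v := by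
  intro h
  have := G.uniform _ h
  simp at this

lemma adjG_ne {G : RGraph 2} {u v : ℕ} (h : adjG G u v) : u ≠ v := by
  rintro rfl; exact adjG_irrefl u h

lemma adjG_lt_left {G : RGraph 2} {u v : ℕ} (h : adjG G u v) : u < G.n :=
  G.valid _ h u (by simp)

lemma adjG_lt_right {G : RGraph 2} {u v : ℕ} (h : adjG G u v) : v < G.n :=
  G.valid _ h v (by simp)

lemma mem_nbrG {G : RGraph 2} {u v : ℕ} : u ∈ nbrG G v ↔ adjG G v u := by
  unfold nbrG adjG
  simp only [Finset.mem_filter, Finset.mem_range, and_iff_right_iff_imp]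
  exact fun h => adjG_lt_right h

lemma nbrG_subset {G : RGraph 2} (v : ℕ) : nbrG G v ⊆ Finset.range G.n :=
  Finset.filter_subset _ _

lemma link_card_eq {G : RGraph 2} (v : ℕ) :
    (link G v).card = (nbrG G v).card := by
  have himg : link G v = (nbrG G v).image (fun u => ({u} : Finset ℕ)) := by
    ext s
    unfold link
    simp only [Finset.mem_image, Finset.mem_filter]
    constructor
    · rintro ⟨e, ⟨he, hve⟩, rfl⟩
      have h2 := G.uniform _ he
      obtain ⟨a, b, hab, rfl⟩ := Finset.card_eq_two.1 h2
      rcases Finset.mem_insert.1 hve with rfl | hb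
      · refine ⟨b, mem_nbrG.2 ?_, ?_⟩
        · exact he
        · rw [Finset.erase_insert (by simpa using hab)]
      · have hb' : v = b := by simpa using hb
        subst hb'
        refine ⟨a, mem_nbrG.2 ?_, ?_⟩
        · rwa [Finset.pair_comm] at he
        · rw [Finset.pair_comm, Finset.erase_insert (by simpa using hab.symm)]
    · rintro ⟨u, hu, rfl⟩
      have hadj := mem_nbrG.1 hu
      refine ⟨{v, u}, ⟨hadj, by simp⟩, ?_⟩
      have hne : u ≠ v := (adjG_ne hadj).symm
      rw [Finset.erase_insert (by simpa using hne.symm)]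
  rw [himg, Finset.card_image_of_injective _ fun a b h => by simpa using h]

/-- A clique predicate. -/
def cliqueG (G : RGraph 2) (S : Finset ℕ) : Prop :=
  ∀ u ∈ S, ∀ v ∈ S, u ≠ v → adjG G u v

lemma copy_of_clique (G : RGraph 2) (t : ℕ) (S : Finset ℕ) (hcard : S.card = t)
    (hlt : ∀ v ∈ S, v < G.n) (hadj : cliqueG G S) : ContainsCopy G (completeGraph t) := by
  classical
  have horder := S.orderIsoOfFin hcard
  refine ⟨fun i => if h : i < t then (horder ⟨i, h⟩ : ℕ) else 0, ?_, ?_, ?_⟩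
  · intro i hi j hj hij
    have hi' : i < t := by simpa [completeGraph] using hi
    have hj' : j < t := by simpa [completeGraph] using hj
    simp only [dif_pos hi', dif_pos hj'] at hij
    have : horder ⟨i, hi'⟩ = horder ⟨j, hj'⟩ := Subtype.ext hij
    simpa using horder.injective this
  · intro i hi
    have hi' : i < t := by simpa [completeGraph] using hi
    simp only [dif_pos hi']
    exact hlt _ (horder ⟨i, hi'⟩).2
  · intro e he
    simp only [completeGraph, Finset.mem_powersetCard] at he
    obtain ⟨hsub, h2⟩ := he
    obtain ⟨a, b, hab, rfl⟩ := Finset.card_eq_two.1 h2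
    have ha : a < t := by simpa using hsub (by simp : a ∈ ({a, b} : Finset ℕ))
    have hb : b < t := by simpa using hsub (by simp : b ∈ ({a, b} : Finset ℕ))
    have himg : ({a, b} : Finset ℕ).image
        (fun i => if h : i < t then (horder ⟨i, h⟩ : ℕ) else 0) =
        {(horder ⟨a, ha⟩ : ℕ), (horder ⟨b, hb⟩ : ℕ)} := by
      rw [Finset.image_insert, Finset.image_singleton, dif_pos ha, dif_pos hb]
    rw [himg]
    have hne : (horder ⟨a, ha⟩ : ℕ) ≠ (horder ⟨b, hb⟩ : ℕ) := by
      intro h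
      exact hab (by simpa using horder.injective (Subtype.ext h))
    exact hadj _ (horder ⟨a, ha⟩).2 _ (horder ⟨b, hb⟩).2 hne

set_option maxHeartbeats 1000000 in
/-- For every `t ≥ 3` there are `ε > 0` and `n0` such that every `K_t`-free
graph `G` on `n ≥ n0` vertices with `d_{𝔅(K_{t-1})}(G) ≤ ε n²` and minimum degree at least
`((t-2)/(t-1) - ε) n` is `(t-1)`-partite. -/
theorem kt_free_is_multipartite (t : ℕ) (ht : 3 ≤ t) :
    ∃ ε > (0 : ℝ), ∃ n0 : ℕ, ∀ G : RGraph 2, n0 ≤ G.n →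
      ¬ ContainsCopy G (completeGraph t) →
      distFam (blowupFam (completeGraph (t - 1))) G ≤ ε * (G.n : ℝ) ^ 2 →
      (∀ v < G.n, (((t : ℝ) - 2) / ((t : ℝ) - 1) - ε) * (G.n : ℝ) ≤ ((link G v).card : ℝ)) →
      ∃ c : ℕ → Fin (t - 1), ∀ e ∈ G.edges, ∀ u ∈ e, ∀ v ∈ e, u ≠ v → c u ≠ c v := by
  classical
  set r : ℕ := t - 1 with hrdef
  have hr2 : 2 ≤ r := by omega
  have hrt : r + 1 = t := by omega
  set rr : ℝ := (r : ℝ) with hrrdef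
  have hrr2 : (2:ℝ) ≤ rr := by rw [hrrdef]; exact_mod_cast hr2
  have hrr0 : (0:ℝ) < rr := by linarith
  have htr : (t:ℝ) - 1 = rr := by
    have : ((r:ℕ):ℝ) + 1 = ((r+1 : ℕ):ℝ) := by push_cast; ring
    rw [hrt] at this; linarith [this]
  have hεpos : (0:ℝ) < 1/(100 * ((t:ℝ)-1)^4) := by
    rw [htr]; positivity
  refine ⟨1/(100 * ((t:ℝ)-1)^4), hεpos, 1, ?_⟩
  intro G hn hfree _hdist hdeg
  set ε : ℝ := 1/(100 * ((t:ℝ)-1)^4) with hεdef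
  have hεr : ε * (100 * rr^4) = 1 := by
    rw [hεdef, htr]; field_simp
  have hεpos' : (0:ℝ) < ε := hεpos
  set n : ℕ := G.n with hndef
  have hn0 : (0:ℝ) < (n:ℝ) := by exact_mod_cast Nat.lt_of_lt_of_le Nat.zero_lt_one hn
  -- degree bound restated
  have hdeg' : ∀ v, v < n → (n:ℝ) - ((nbrG G v).card:ℝ) ≤ (1/rr + ε) * n := by
    intro v hv
    have h1 := hdeg v hv
    rw [link_card_eq] at h1
    have h2 : (t:ℝ) - 2 = rr - 1 := by rw [← htr]; ring
    rw [h2, htr] at h1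
    have hid : ((rr-1)/rr - ε) * (n:ℝ) = (n:ℝ) - (1/rr + ε) * n := by
      field_simp; ring
    linarith [h1, hid.symm.le]
  have hu : 1/rr = ε * (100 * rr^3) := by
    rw [div_eq_iff (ne_of_gt hrr0)]
    linear_combination -hεr
  have hdeg'' : ∀ v, v < n → (n:ℝ) - (1/rr + ε) * n ≤ ((nbrG G v).card:ℝ) := by
    intro v hv; linarith [hdeg' v hv]
  -- no K_t cliques
  have noclq : ∀ S : Finset ℕ, (∀ v ∈ S, v < n) → cliqueG G S → S.card ≠ t := by
    intro S h1 h2 h3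
    exact hfree (copy_of_clique G t S h3 h1 h2)
  -- common neighborhood
  set C : Finset ℕ → Finset ℕ :=
    fun S => (Finset.range n).filter (fun x => ∀ a ∈ S, adjG G a x) with hCdef
  have hCsub : ∀ S, C S ⊆ Finset.range n := fun S => Finset.filter_subset _ _
  have hCmem : ∀ S x, x ∈ C S ↔ (x < n ∧ ∀ a ∈ S, adjG G a x) := by
    intro S x; rw [hCdef]; simp
  have commonBound : ∀ S : Finset ℕ, (∀ a ∈ S, a < n) →
      (n:ℝ) - (S.card:ℝ) * ((1/rr + ε) * n) ≤ ((C S).card : ℝ) := by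
    intro S hS
    have hsub : Finset.range n \ C S ⊆
        S.biUnion (fun a => (Finset.range n).filter (fun x => ¬ adjG G a x)) := by
      intro x hx
      rw [Finset.mem_sdiff] at hx
      obtain ⟨hx1, hx2⟩ := hx
      rw [hCmem] at hx2
      push_neg at hx2
      obtain ⟨a, ha, hna⟩ := hx2 (Finset.mem_range.1 hx1)
      exact Finset.mem_biUnion.2 ⟨a, ha, Finset.mem_filter.2 ⟨hx1, hna⟩⟩
    have hcard1 : (Finset.range n \ C S).card ≤
        ∑ a ∈ S, ((Finset.range n).filter (fun x => ¬ adjG G a x)).card :=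
      le_trans (Finset.card_le_card hsub) (Finset.card_biUnion_le)
    have hterm : ∀ a ∈ S,
        (((Finset.range n).filter (fun x => ¬ adjG G a x)).card : ℝ) ≤ (1/rr + ε) * n := by
      intro a ha
      have hsplit := Finset.card_filter_add_card_filter_not
        (s := Finset.range n) (p := fun x => adjG G a x)
      have hnbr : (Finset.range n).filter (fun x => adjG G a x) = nbrG G a := by
        apply Finset.filter_congr; intro x _; rfl
      rw [hnbr, Finset.card_range] at hsplit
      have := hdeg' a (hS a ha)
      have hcast : ((nbrG G a).card : ℝ) +
          (((Finset.range n).filter (fun x => ¬ adjG G a x)).card : ℝ) = (n:ℝ) := by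
        exact_mod_cast hsplit
      linarith
    have hsum : ((Finset.range n \ C S).card : ℝ) ≤ (S.card:ℝ) * ((1/rr + ε) * n) := by
      calc ((Finset.range n \ C S).card : ℝ)
          ≤ (∑ a ∈ S, ((Finset.range n).filter (fun x => ¬ adjG G a x)).card : ℕ) := by
            exact_mod_cast hcard1
        _ = ∑ a ∈ S, (((Finset.range n).filter (fun x => ¬ adjG G a x)).card : ℝ) := by
            push_cast; ring
        _ ≤ ∑ _a ∈ S, (1/rr + ε) * (n:ℝ) := Finset.sum_le_sum hterm
        _ = (S.card:ℝ) * ((1/rr + ε) * n) := by rw [Finset.sum_const]; simp [mul_comm]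
    have hsd : (Finset.range n \ C S).card + (C S).card = n := by
      rw [Finset.card_sdiff_add_card_eq_card (hCsub S), Finset.card_range]
    have : ((Finset.range n \ C S).card : ℝ) + ((C S).card : ℝ) = (n:ℝ) := by
      exact_mod_cast congrArg (Nat.cast : ℕ → ℝ) hsd
    linarith
  -- clique insertion helper
  have clique_insert : ∀ (x : ℕ) (S : Finset ℕ), cliqueG G S →
      (∀ z ∈ S, adjG G x z) → cliqueG G (insert x S) := by
    intro x S hS hx u hu v hv huv
    rcases Finset.mem_insert.1 hu with rfl | hu' <;>
      rcases Finset.mem_insert.1 hv with rfl | hv'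
    · exact absurd rfl huv
    · exact hx v hv'
    · exact adjG_symm (hx u hu')
    · exact hS u hu' v hv' huv
  -- existence of a K_r
  have cliquek : ∀ k : ℕ, k ≤ r →
      ∃ U : Finset ℕ, (∀ v ∈ U, v < n) ∧ cliqueG G U ∧ U.card = k := by
    intro k
    induction k with
    | zero => exact fun _ => ⟨∅, by simp, by intro u hu; simp at hu, rfl⟩
    | succ k ih =>
      intro hk
      obtain ⟨U, hU1, hU2, hU3⟩ := ih (by omega)
      have hcb := commonBound U hU1
      have hkr : (U.card : ℝ) ≤ rr - 1 := by
        rw [hU3, hrrdef]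
        have : (k:ℝ) ≤ (r:ℝ) - 1 := by
          have : k + 1 ≤ r := hk
          have := (Nat.cast_le (α := ℝ)).2 this
          push_cast at this; linarith
        exact this
      have hεsmall1 : (rr - 1) * (1/rr + ε) < 1 := by
        rw [hu]
        nlinarith [hεr, hεpos', hrr2, mul_pos hεpos' (mul_pos hrr0 (mul_pos hrr0 hrr0))]
      have hpos : (0:ℝ) < ((C U).card : ℝ) := by
        have h1 : (U.card:ℝ) * ((1/rr + ε) * n) ≤ (rr-1) * ((1/rr + ε) * n) := by
          apply mul_le_mul_of_nonneg_right hkr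
          positivity
        nlinarith [hcb]
      have : 0 < (C U).card := by exact_mod_cast hpos
      obtain ⟨x, hx⟩ := Finset.card_pos.1 this
      rw [hCmem] at hx
      obtain ⟨hxn, hxadj⟩ := hx
      have hxU : x ∉ U := fun h => adjG_irrefl x (hxadj x h)
      refine ⟨insert x U, ?_, ?_, ?_⟩
      · intro v hv
        rcases Finset.mem_insert.1 hv with rfl | hv'
        · exact hxn
        · exact hU1 v hv'
      · exact clique_insert x U hU2 (fun z hz => adjG_symm (hxadj z hz))
      · rw [Finset.card_insert_of_notMem hxU, hU3]
  obtain ⟨U, hUn, hUclq, hUcard⟩ := cliquek r le_rfl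
  have hUcardR : (U.card : ℝ) = rr := by rw [hUcard, hrrdef]
  -- the parts
  set A : ℕ → Finset ℕ := fun u => C (U.erase u) with hAdef
  have hAsub : ∀ u, A u ⊆ Finset.range n := fun u => hCsub _
  have hAmem : ∀ u x, x ∈ A u ↔ (x < n ∧ ∀ a ∈ U.erase u, adjG G a x) := by
    intro u x; rw [hAdef]; exact hCmem _ x
  have hAlow : ∀ u ∈ U, (1/rr - (rr-1)*ε) * n ≤ ((A u).card : ℝ) := by
    intro u hu
    have hcb := commonBound (U.erase u) (fun a ha => hUn a (Finset.mem_of_mem_erase ha))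
    have hec : ((U.erase u).card : ℝ) = rr - 1 := by
      rw [Finset.card_erase_of_mem hu, hUcard]
      have : 1 ≤ r := by omega
      push_cast [Nat.cast_sub this]; rw [hrrdef]
    rw [hec] at hcb
    have hid : (1/rr - (rr-1)*ε) * (n:ℝ) = (n:ℝ) - (rr-1) * ((1/rr + ε) * n) := by
      field_simp; ring
    linarith
  -- disjointness of parts
  have hAdisj : ∀ u ∈ U, ∀ u' ∈ U, u ≠ u' → ∀ x, x ∈ A u → x ∈ A u' → False := by
    intro u hu u' hu' huu' x hxu hxu'
    have hxadj : ∀ a ∈ U, adjG G a x := by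
      intro a ha
      by_cases hau : a = u
      · have : adjG G u x := ((hAmem u' x).1 hxu').2 u (Finset.mem_erase.2 ⟨huu', hu⟩)
        rwa [hau]
      · exact ((hAmem u x).1 hxu).2 a (Finset.mem_erase.2 ⟨hau, ha⟩)
    have hxU : x ∉ U := fun h => adjG_irrefl x (hxadj x h)
    have hxn : x < n := ((hAmem u x).1 hxu).1
    refine noclq (insert x U) ?_ ?_ ?_
    · intro v hv
      rcases Finset.mem_insert.1 hv with rfl | hv'
      · exact hxn
      · exact hUn v hv'
    · exact clique_insert x U hUclq (fun z hz => adjG_symm (hxadj z hz))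
    · rw [Finset.card_insert_of_notMem hxU, hUcard]; exact hrt
  -- independence of parts
  have hAindep : ∀ u ∈ U, ∀ x, x ∈ A u → ∀ y, y ∈ A u → adjG G x y → False := by
    intro u hu x hxA y hyA hxy
    have hxe : x ∉ U.erase u := fun h => adjG_irrefl x (((hAmem u x).1 hxA).2 x h)
    have hye : y ∉ U.erase u := fun h => adjG_irrefl y (((hAmem u y).1 hyA).2 y h)
    have hxyne : x ≠ y := adjG_ne hxy
    have hclq1 : cliqueG G (U.erase u) := by
      intro a ha b hb hab
      exact hUclq a (Finset.mem_of_mem_erase ha) b (Finset.mem_of_mem_erase hb) hab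
    have hclq2 : cliqueG G (insert y (U.erase u)) :=
      clique_insert y _ hclq1 (fun z hz => adjG_symm (((hAmem u y).1 hyA).2 z hz))
    have hclq3 : cliqueG G (insert x (insert y (U.erase u))) := by
      apply clique_insert x _ hclq2
      intro z hz
      rcases Finset.mem_insert.1 hz with rfl | hz'
      · exact hxy
      · exact adjG_symm (((hAmem u x).1 hxA).2 z hz')
    refine noclq _ ?_ hclq3 ?_
    · intro v hv
      rcases Finset.mem_insert.1 hv with h | hv'
      · exact h ▸ ((hAmem u x).1 hxA).1
      · rcases Finset.mem_insert.1 hv' with h | hv''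
        · exact h ▸ ((hAmem u y).1 hyA).1
        · exact hUn v (Finset.mem_of_mem_erase hv'')
    · have hx1 : x ∉ insert y (U.erase u) := by
        intro h
        rcases Finset.mem_insert.1 h with h' | h'
        · exact hxyne h'
        · exact hxe h'
      rw [Finset.card_insert_of_notMem hx1, Finset.card_insert_of_notMem hye,
        Finset.card_erase_of_mem hu, hUcard]
      omega
  -- triple disjoint counting
  have triple : ∀ B1 B2 B3 : Finset ℕ, B1 ⊆ Finset.range n → B2 ⊆ Finset.range n →
      B3 ⊆ Finset.range n → Disjoint B1 B2 → Disjoint B1 B3 → Disjoint B2 B3 →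
      (B1.card:ℝ) + (B2.card:ℝ) + (B3.card:ℝ) ≤ (n:ℝ) := by
    intro B1 B2 B3 h1 h2 h3 d12 d13 d23
    have hU2 : (B1 ∪ B2 ∪ B3).card = B1.card + B2.card + B3.card := by
      rw [Finset.card_union_of_disjoint (Finset.disjoint_union_left.2 ⟨d13, d23⟩),
        Finset.card_union_of_disjoint d12]
    have hle : (B1 ∪ B2 ∪ B3).card ≤ n := by
      have := Finset.card_le_card (Finset.union_subset (Finset.union_subset h1 h2) h3)
      simpa using this
    have : B1.card + B2.card + B3.card ≤ n := hU2 ▸ hle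
    exact_mod_cast this
  -- first miss bound
  have hMiss1 : ∀ u ∈ U, ∀ u' ∈ U, u ≠ u' → ∀ y ∈ A u',
      (((A u) \ nbrG G y).card : ℝ) ≤ rr * ε * n := by
    intro u hu u' hu' huu' y hy
    have hyn : y < n := ((hAmem u' y).1 hy).1
    have d12 : Disjoint (A u \ nbrG G y) (A u') := by
      rw [Finset.disjoint_left]
      intro z hz hz'
      exact hAdisj u hu u' hu' huu' z (Finset.mem_sdiff.1 hz).1 hz'
    have d13 : Disjoint (A u \ nbrG G y) (nbrG G y) := Finset.sdiff_disjoint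
    have d23 : Disjoint (A u') (nbrG G y) := by
      rw [Finset.disjoint_left]
      intro z hz hz'
      exact hAindep u' hu' y hy z hz (mem_nbrG.1 hz')
    have htr3 := triple _ _ _ ((Finset.sdiff_subset).trans (hAsub u)) (hAsub u')
      (nbrG_subset y) d12 d13 d23
    have h2 := hAlow u' hu'
    have h3 := hdeg'' y hyn
    have hid : (n:ℝ) - (1/rr - (rr-1)*ε)*n - ((n:ℝ) - (1/rr + ε)*n) = rr*ε*n := by ring
    linarith
  -- second miss bound
  have hMiss2 : ∀ x, x < n → ∀ i ∈ U, ((nbrG G x ∩ A i).card : ℝ) ≤ rr^2*ε*n →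
      ∀ j ∈ U, j ≠ i → (((A j) \ nbrG G x).card : ℝ) ≤ (rr^2+rr)*ε*n := by
    intro x hx i hi hcol j hj hji
    have d12 : Disjoint (A j \ nbrG G x) (A i \ nbrG G x) := by
      rw [Finset.disjoint_left]
      intro z hz hz'
      exact hAdisj j hj i hi hji z (Finset.mem_sdiff.1 hz).1 (Finset.mem_sdiff.1 hz').1
    have d13 : Disjoint (A j \ nbrG G x) (nbrG G x) := Finset.sdiff_disjoint
    have d23 : Disjoint (A i \ nbrG G x) (nbrG G x) := Finset.sdiff_disjoint
    have htr3 := triple _ _ _ ((Finset.sdiff_subset).trans (hAsub j))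
      ((Finset.sdiff_subset).trans (hAsub i)) (nbrG_subset x) d12 d13 d23
    have hsplit : ((A i ∩ nbrG G x).card : ℕ) + ((A i \ nbrG G x).card : ℕ) = (A i).card :=
      Finset.card_inter_add_card_sdiff _ _
    have hsplit' : ((A i ∩ nbrG G x).card : ℝ) + ((A i \ nbrG G x).card : ℝ) = ((A i).card:ℝ) := by
      exact_mod_cast hsplit
    have hcomm : (A i ∩ nbrG G x) = (nbrG G x ∩ A i) := Finset.inter_comm _ _
    have h2 := hAlow i hi
    have h3 := hdeg'' x hx
    have hid : (n:ℝ) - ((n:ℝ) - (1/rr + ε)*n) - ((1/rr - (rr-1)*ε)*n - rr^2*ε*n)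
        = (rr^2+rr)*ε*n := by ring
    rw [hcomm] at hsplit'
    linarith
  -- every vertex has a part it barely sees
  have colorExists : ∀ x, x < n → ∃ i, i ∈ U ∧ ((nbrG G x ∩ A i).card : ℝ) ≤ rr^2*ε*n := by
    intro x hx
    by_contra hcon
    push_neg at hcon
    have hbig : ∀ i ∈ U, rr^2*ε*n < ((nbrG G x ∩ A i).card : ℝ) := fun i hi =>
      hcon i hi
    have grow : ∀ V : Finset ℕ, V ⊆ U → ∃ S : Finset ℕ, S.card = V.card ∧ cliqueG G S ∧
        (∀ z ∈ S, z ∈ nbrG G x) ∧ (∀ z ∈ S, ∃ u ∈ V, z ∈ A u) := by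
      intro V
      induction V using Finset.induction_on with
      | empty => exact fun _ => ⟨∅, by simp, by intro a ha; simp at ha, by simp, by simp⟩
      | @insert v V hvV ih =>
        intro hsub
        have hvU : v ∈ U := hsub (Finset.mem_insert_self v V)
        have hVU : V ⊆ U := fun a ha => hsub (Finset.mem_insert_of_mem ha)
        obtain ⟨S, hScard, hSclq, hSnbr, hSin⟩ := ih hVU
        have hScard' : (S.card : ℝ) ≤ rr - 1 := by
          have hVe : V ⊆ U.erase v := fun a ha => Finset.mem_erase.2 ⟨fun h => hvV (h ▸ ha), hVU ha⟩
          have := Finset.card_le_card hVe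
          rw [Finset.card_erase_of_mem hvU, hUcard] at this
          rw [hScard]
          have h1 : (V.card : ℝ) ≤ ((r - 1 : ℕ) : ℝ) := by exact_mod_cast this
          have h2 : ((r - 1 : ℕ) : ℝ) = rr - 1 := by
            have : 1 ≤ r := by omega
            push_cast [Nat.cast_sub this]; rw [hrrdef]
          linarith
        set Bad := S.biUnion (fun z => A v \ nbrG G z) with hBadDef
        have hbad : ((Bad).card : ℝ) ≤ (S.card:ℝ) * (rr*ε*n) := by
          calc ((Bad).card : ℝ)
              ≤ ((∑ z ∈ S, (A v \ nbrG G z).card : ℕ) : ℝ) := by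
                exact_mod_cast Finset.card_biUnion_le
            _ = ∑ z ∈ S, ((A v \ nbrG G z).card : ℝ) := by push_cast; ring
            _ ≤ ∑ _z ∈ S, rr*ε*(n:ℝ) := by
                apply Finset.sum_le_sum
                intro z hz
                obtain ⟨u0, hu0V, hzA⟩ := hSin z hz
                exact hMiss1 v hvU u0 (hVU hu0V) (fun h => hvV (h ▸ hu0V)) z hzA
            _ = (S.card:ℝ) * (rr*ε*n) := by rw [Finset.sum_const]; simp [mul_comm]
        have hCandLow : ((((nbrG G x ∩ A v) \ Bad).card : ℝ)) ≥
            ((nbrG G x ∩ A v).card : ℝ) - ((Bad).card : ℝ) := by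
          have h1 : (nbrG G x ∩ A v).card ≤ ((nbrG G x ∩ A v) \ Bad).card + Bad.card :=
            Finset.card_le_card_sdiff_add_card
          have := (Nat.cast_le (α := ℝ)).2 h1
          push_cast at this
          linarith
        have hpos : (0:ℝ) < ((((nbrG G x ∩ A v) \ Bad).card : ℝ)) := by
          have hb := hbig v hvU
          have h1 : (S.card:ℝ) * (rr*ε*n) ≤ (rr-1) * (rr*ε*n) := by
            apply mul_le_mul_of_nonneg_right hScard'
            positivity
          have hkey : rr^2*ε*(n:ℝ) - (rr-1)*(rr*ε*n) = rr*ε*n := by ring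
          have hpos0 : (0:ℝ) < rr*ε*n := by positivity
          linarith
        have : 0 < (((nbrG G x ∩ A v) \ Bad)).card := by exact_mod_cast hpos
        obtain ⟨z₀, hz₀⟩ := Finset.card_pos.1 this
        rw [Finset.mem_sdiff, Finset.mem_inter] at hz₀
        obtain ⟨⟨hz₀x, hz₀A⟩, hz₀B⟩ := hz₀
        have hz₀adj : ∀ z ∈ S, adjG G z z₀ := by
          intro z hz
          by_contra hna
          exact hz₀B (Finset.mem_biUnion.2 ⟨z, hz, Finset.mem_sdiff.2 ⟨hz₀A,
            fun hmem => hna (mem_nbrG.1 hmem)⟩⟩)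
        have hz₀S : z₀ ∉ S := fun h => adjG_irrefl z₀ (hz₀adj z₀ h)
        refine ⟨insert z₀ S, ?_, ?_, ?_, ?_⟩
        · rw [Finset.card_insert_of_notMem hz₀S, Finset.card_insert_of_notMem hvV, hScard]
        · exact clique_insert z₀ S hSclq (fun z hz => adjG_symm (hz₀adj z hz))
        · intro z hz
          rcases Finset.mem_insert.1 hz with h | h
          · exact h ▸ hz₀x
          · exact hSnbr z h
        · intro z hz
          rcases Finset.mem_insert.1 hz with h | h
          · exact ⟨v, Finset.mem_insert_self v V, h ▸ hz₀A⟩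
          · obtain ⟨u0, hu0, hu0'⟩ := hSin z h
            exact ⟨u0, Finset.mem_insert_of_mem hu0, hu0'⟩
    obtain ⟨S, hScard, hSclq, hSnbr, _⟩ := grow U Finset.Subset.rfl
    have hxS : x ∉ S := fun h => adjG_irrefl x (mem_nbrG.1 (hSnbr x h))
    refine noclq (insert x S) ?_ ?_ ?_
    · intro v hv
      rcases Finset.mem_insert.1 hv with h | h
      · exact h ▸ hx
      · exact Finset.mem_range.1 (nbrG_subset x (hSnbr v h))
    · exact clique_insert x S hSclq (fun z hz => mem_nbrG.1 (hSnbr z hz))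
    · rw [Finset.card_insert_of_notMem hxS, hScard, hUcard]; exact hrt
  -- choose the coloring
  choose! col hcolU hcolB using colorExists
  -- properness
  have proper : ∀ x, x < n → ∀ y, y < n → adjG G x y → col x ≠ col y := by
    intro x hx y hy hxy hcc
    have hwU : col x ∈ U := hcolU x hx
    have hcolx : ((nbrG G x ∩ A (col x)).card : ℝ) ≤ rr^2*ε*n := hcolB x hx
    have hcoly : ((nbrG G y ∩ A (col x)).card : ℝ) ≤ rr^2*ε*n := by
      have h0 := hcolB y hy
      rwa [← hcc] at h0
    have grow2 : ∀ V : Finset ℕ, V ⊆ U.erase (col x) → ∃ S : Finset ℕ, S.card = V.card ∧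
        cliqueG G S ∧ (∀ z ∈ S, z ∈ nbrG G x ∧ z ∈ nbrG G y) ∧
        (∀ z ∈ S, ∃ u ∈ V, z ∈ A u) := by
      intro V
      induction V using Finset.induction_on with
      | empty => exact fun _ => ⟨∅, by simp, by intro a ha; simp at ha, by simp, by simp⟩
      | @insert v V hvV ih =>
        intro hsub
        have hvE : v ∈ U.erase (col x) := hsub (Finset.mem_insert_self v V)
        have hvU : v ∈ U := Finset.mem_of_mem_erase hvE
        have hvw : v ≠ col x := (Finset.mem_erase.1 hvE).1
        have hVE : V ⊆ U.erase (col x) := fun a ha => hsub (Finset.mem_insert_of_mem ha)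
        obtain ⟨S, hScard, hSclq, hSnbr, hSin⟩ := ih hVE
        have hScard' : (S.card : ℝ) ≤ rr - 2 := by
          have hVe : V ⊆ (U.erase (col x)).erase v := fun a ha =>
            Finset.mem_erase.2 ⟨fun h => hvV (h ▸ ha), hVE ha⟩
          have h0 := Finset.card_le_card hVe
          rw [Finset.card_erase_of_mem hvE, Finset.card_erase_of_mem hwU, hUcard] at h0
          rw [hScard]
          have h1 : (V.card : ℝ) ≤ ((r - 1 - 1 : ℕ) : ℝ) := by exact_mod_cast h0
          have h2 : ((r - 1 - 1 : ℕ) : ℝ) = rr - 2 := by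
            have h3 : (r - 1 - 1) + 2 = r := by omega
            have h4 : (((r - 1 - 1) + 2 : ℕ) : ℝ) = ((r:ℕ):ℝ) := by rw [h3]
            push_cast at h4
            rw [hrrdef]; linarith
          linarith
        set Bad2 := ((A v \ nbrG G x) ∪ (A v \ nbrG G y)) ∪
          S.biUnion (fun z => A v \ nbrG G z) with hBad2Def
        have hbx : ((A v \ nbrG G x).card : ℝ) ≤ (rr^2+rr)*ε*n :=
          hMiss2 x hx (col x) hwU hcolx v hvU hvw
        have hby : ((A v \ nbrG G y).card : ℝ) ≤ (rr^2+rr)*ε*n :=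
          hMiss2 y hy (col x) hwU hcoly v hvU hvw
        have hbS : ((S.biUnion (fun z => A v \ nbrG G z)).card : ℝ) ≤ (S.card:ℝ) * (rr*ε*n) := by
          calc ((S.biUnion (fun z => A v \ nbrG G z)).card : ℝ)
              ≤ ((∑ z ∈ S, (A v \ nbrG G z).card : ℕ) : ℝ) := by
                exact_mod_cast Finset.card_biUnion_le
            _ = ∑ z ∈ S, ((A v \ nbrG G z).card : ℝ) := by push_cast; ring
            _ ≤ ∑ _z ∈ S, rr*ε*(n:ℝ) := by
                apply Finset.sum_le_sum
                intro z hz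
                obtain ⟨u0, hu0V, hzA⟩ := hSin z hz
                have hu0U : u0 ∈ U := Finset.mem_of_mem_erase (hVE hu0V)
                exact hMiss1 v hvU u0 hu0U (fun h => hvV (h ▸ hu0V)) z hzA
            _ = (S.card:ℝ) * (rr*ε*n) := by rw [Finset.sum_const]; simp [mul_comm]
        have hbad2 : ((Bad2).card : ℝ) ≤ 2*((rr^2+rr)*ε*n) + (rr-2)*(rr*ε*n) := by
          have hc1 : (Bad2).card ≤ ((A v \ nbrG G x) ∪ (A v \ nbrG G y)).card +
              (S.biUnion (fun z => A v \ nbrG G z)).card := Finset.card_union_le _ _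
          have hc2 : ((A v \ nbrG G x) ∪ (A v \ nbrG G y)).card ≤
              (A v \ nbrG G x).card + (A v \ nbrG G y).card := Finset.card_union_le _ _
          have hc3 : ((Bad2).card:ℝ) ≤ ((A v \ nbrG G x).card : ℝ) +
              ((A v \ nbrG G y).card : ℝ) + ((S.biUnion (fun z => A v \ nbrG G z)).card : ℝ) := by
            have := le_trans hc1 (Nat.add_le_add_right hc2 _)
            exact_mod_cast this
          have hc4 : (S.card:ℝ) * (rr*ε*n) ≤ (rr-2)*(rr*ε*n) := by
            apply mul_le_mul_of_nonneg_right hScard'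
            positivity
          linarith
        have hCandLow : (((A v \ Bad2).card : ℝ)) ≥ ((A v).card : ℝ) - ((Bad2).card : ℝ) := by
          have h1 : (A v).card ≤ (A v \ Bad2).card + Bad2.card :=
            Finset.card_le_card_sdiff_add_card
          have := (Nat.cast_le (α := ℝ)).2 h1
          push_cast at this
          linarith
        have hfin : (0:ℝ) < (1/rr - (rr-1)*ε)*(n:ℝ) - (2*((rr^2+rr)*ε*n) + (rr-2)*(rr*ε*n)) := by
          have hfin' : (1/rr - (rr-1)*ε)*(n:ℝ) - (2*((rr^2+rr)*ε*n) + (rr-2)*(rr*ε*n))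
              = ε * (100*rr^3 - (rr-1) - (2*(rr^2+rr) + (rr-2)*rr)) * n := by
            rw [hu]; ring
          rw [hfin']
          have h100 : (0:ℝ) < 100*rr^3 - (rr-1) - (2*(rr^2+rr) + (rr-2)*rr) := by
            nlinarith [hrr2]
          exact mul_pos (mul_pos hεpos' h100) hn0
        have hpos : (0:ℝ) < (((A v \ Bad2).card : ℝ)) := by
          have hlow := hAlow v hvU
          linarith
        have : 0 < ((A v \ Bad2)).card := by exact_mod_cast hpos
        obtain ⟨z₀, hz₀⟩ := Finset.card_pos.1 this
        rw [Finset.mem_sdiff] at hz₀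
        obtain ⟨hz₀A, hz₀B⟩ := hz₀
        have hz₀x : z₀ ∈ nbrG G x := by
          by_contra hna
          exact hz₀B (Finset.mem_union.2 (Or.inl (Finset.mem_union.2 (Or.inl
            (Finset.mem_sdiff.2 ⟨hz₀A, hna⟩)))))
        have hz₀y : z₀ ∈ nbrG G y := by
          by_contra hna
          exact hz₀B (Finset.mem_union.2 (Or.inl (Finset.mem_union.2 (Or.inr
            (Finset.mem_sdiff.2 ⟨hz₀A, hna⟩)))))
        have hz₀adj : ∀ z ∈ S, adjG G z z₀ := by
          intro z hz
          by_contra hna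
          exact hz₀B (Finset.mem_union.2 (Or.inr (Finset.mem_biUnion.2 ⟨z, hz,
            Finset.mem_sdiff.2 ⟨hz₀A, fun hmem => hna (mem_nbrG.1 hmem)⟩⟩)))
        have hz₀S : z₀ ∉ S := fun h => adjG_irrefl z₀ (hz₀adj z₀ h)
        refine ⟨insert z₀ S, ?_, ?_, ?_, ?_⟩
        · rw [Finset.card_insert_of_notMem hz₀S, Finset.card_insert_of_notMem hvV, hScard]
        · exact clique_insert z₀ S hSclq (fun z hz => adjG_symm (hz₀adj z hz))
        · intro z hz
          rcases Finset.mem_insert.1 hz with h | h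
          · exact ⟨h ▸ hz₀x, h ▸ hz₀y⟩
          · exact hSnbr z h
        · intro z hz
          rcases Finset.mem_insert.1 hz with h | h
          · exact ⟨v, Finset.mem_insert_self v V, h ▸ hz₀A⟩
          · obtain ⟨u0, hu0, hu0'⟩ := hSin z h
            exact ⟨u0, Finset.mem_insert_of_mem hu0, hu0'⟩
    obtain ⟨S, hScard, hSclq, hSnbr, _⟩ := grow2 (U.erase (col x)) Finset.Subset.rfl
    have hyS : y ∉ S := fun h => adjG_irrefl y (mem_nbrG.1 (hSnbr y h).2)
    have hxyne : x ≠ y := adjG_ne hxy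
    have hxS : x ∉ insert y S := by
      intro h
      rcases Finset.mem_insert.1 h with h' | h'
      · exact hxyne h'
      · exact adjG_irrefl x (mem_nbrG.1 (hSnbr x h').1)
    have hclq2 : cliqueG G (insert y S) :=
      clique_insert y S hSclq (fun z hz => mem_nbrG.1 (hSnbr z hz).2)
    have hclq3 : cliqueG G (insert x (insert y S)) := by
      apply clique_insert x _ hclq2
      intro z hz
      rcases Finset.mem_insert.1 hz with h | h
      · exact h ▸ hxy
      · exact mem_nbrG.1 (hSnbr z h).1
    refine noclq (insert x (insert y S)) ?_ hclq3 ?_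
    · intro a ha
      rcases Finset.mem_insert.1 ha with h | h
      · exact h ▸ hx
      · rcases Finset.mem_insert.1 h with h' | h'
        · exact h' ▸ hy
        · exact Finset.mem_range.1 (nbrG_subset x (hSnbr a h').1)
    · rw [Finset.card_insert_of_notMem hxS, Finset.card_insert_of_notMem hyS, hScard,
        Finset.card_erase_of_mem hwU, hUcard]
      omega
  -- assemble the coloring into `Fin (t-1)`
  have hUt : U.card = t - 1 := hUcard
  refine ⟨fun x => if h : x < n ∧ col x ∈ U then
      Fin.cast hUt (U.equivFin ⟨col x, h.2⟩) else ⟨0, by omega⟩, ?_⟩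
  intro e he u hu v hv huv
  have he2 := G.uniform e he
  have hsub : ({u, v} : Finset ℕ) ⊆ e := by
    intro a ha
    rcases Finset.mem_insert.1 ha with h | h
    · exact h ▸ hu
    · exact (Finset.mem_singleton.1 h) ▸ hv
  have hcard2 : ({u, v} : Finset ℕ).card = 2 := Finset.card_pair huv
  have heq : ({u, v} : Finset ℕ) = e :=
    Finset.eq_of_subset_of_card_le hsub (by rw [he2, hcard2])
  have hadj : adjG G u v := by rw [adjG, heq]; exact he
  have hun : u < n := adjG_lt_left hadj
  have hvn : v < n := adjG_lt_right hadj
  have hcne := proper u hun v hvn hadj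
  have hcu : col u ∈ U := hcolU u hun
  have hcv : col v ∈ U := hcolU v hvn
  simp only []
  rw [dif_pos (And.intro hun hcu), dif_pos (And.intro hvn hcv)]
  intro hEq
  apply hcne
  have h1 : (U.equivFin ⟨col u, hcu⟩ : Fin U.card) = U.equivFin ⟨col v, hcv⟩ := by
    apply Fin.ext
    have h2 := congrArg Fin.val hEq
    simpa using h2
  have h3 := U.equivFin.injective h1
  simpa using h3

end TuranGT
end

section
/- Let r ≥ 3. For every ε>0 there exists n0 such that every T_r-free r-graph F with v(F)=n ≥ n0 contains a subgraph F̂ ⊆ F that is Σ_r-free and satisfies |F̂| ≥ |F| − ε n^r. -/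
open Filter

namespace TuranGT

variable {r : ℕ}

lemma image_range_getD (l : List ℕ) {k : ℕ} (hk : l.length = k) :
    (Finset.range k).image (fun i => l.getD i 0) = l.toFinset := by
  ext a
  simp only [Finset.mem_image, Finset.mem_range, List.mem_toFinset]
  constructor
  · rintro ⟨i, hi, rfl⟩
    rw [List.getD_eq_getElem l 0 (by omega)]
    exact List.getElem_mem _
  · intro ha
    obtain ⟨i, hi, rfl⟩ := List.mem_iff_getElem.1 ha
    exact ⟨i, by omega, (List.getD_eq_getElem l 0 hi)⟩

lemma pair_struct (hr : 3 ≤ r) (F : RGraph r) {e1 e2 : Finset ℕ}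
    (h1 : e1 ∈ F.edges) (h2 : e2 ∈ F.edges) (hc : (e1 ∩ e2).card = r - 1) :
    ∃ x y : ℕ, x ≠ y ∧ e1 = insert x (e1 ∩ e2) ∧ e2 = insert y (e1 ∩ e2) ∧
      x ∉ e1 ∩ e2 ∧ y ∉ e1 ∩ e2 ∧ symmDiff e1 e2 = {x, y} := by
  have hc1 : e1.card = r := F.uniform e1 h1
  have hc2 : e2.card = r := F.uniform e2 h2
  have hd1 : (e1 \ e2).card = 1 := by
    have := Finset.card_sdiff_add_card_inter e1 e2
    omega
  have hd2 : (e2 \ e1).card = 1 := by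
    have := Finset.card_sdiff_add_card_inter e2 e1
    rw [Finset.inter_comm] at this
    omega
  obtain ⟨x, hx⟩ := Finset.card_eq_one.1 hd1
  obtain ⟨y, hy⟩ := Finset.card_eq_one.1 hd2
  have hxm : x ∈ e1 \ e2 := by rw [hx]; exact Finset.mem_singleton_self x
  have hym : y ∈ e2 \ e1 := by rw [hy]; exact Finset.mem_singleton_self y
  simp only [Finset.mem_sdiff] at hxm hym
  refine ⟨x, y, ?_, ?_, ?_, ?_, ?_, ?_⟩
  · rintro rfl; exact hxm.2 hym.1
  · have := Finset.sdiff_union_inter e1 e2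
    rw [hx] at this
    simpa using this.symm
  · have := Finset.sdiff_union_inter e2 e1
    rw [hy, Finset.inter_comm] at this
    simpa using this.symm
  · simp only [Finset.mem_inter]; tauto
  · simp only [Finset.mem_inter]; tauto
  · ext a
    rw [Finset.mem_symmDiff]
    have hax : a ∈ e1 \ e2 ↔ a = x := by rw [hx]; simp
    have hay : a ∈ e2 \ e1 ↔ a = y := by rw [hy]; simp
    simp only [Finset.mem_sdiff] at hax hay
    simp only [Finset.mem_insert, Finset.mem_singleton]
    tauto

lemma trCopy (hr : 3 ≤ r) (F : RGraph r) {e1 e2 e3 : Finset ℕ}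
    (h1 : e1 ∈ F.edges) (h2 : e2 ∈ F.edges) (h3 : e3 ∈ F.edges)
    (hc : (e1 ∩ e2).card = r - 1) (hsub : symmDiff e1 e2 ⊆ e3)
    (hdisj : ∀ a ∈ e3, a ∉ e1 ∩ e2) : ContainsCopy F (genTriangle r) := by
  classical
  obtain ⟨x, y, hxy, he1, he2, hxA, hyA, hsd⟩ := pair_struct hr F h1 h2 hc
  set A : Finset ℕ := e1 ∩ e2 with hA
  set B : Finset ℕ := e3 \ {x, y} with hB
  have hx3 : x ∈ e3 := hsub (by rw [hsd]; simp)
  have hy3 : y ∈ e3 := hsub (by rw [hsd]; simp)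
  have hxyd : ({x, y} : Finset ℕ) ⊆ e3 := by
    intro a ha; simp only [Finset.mem_insert, Finset.mem_singleton] at ha
    rcases ha with rfl | rfl <;> assumption
  have hcardB : B.card = r - 2 := by
    rw [hB, Finset.card_sdiff_of_subset hxyd, F.uniform e3 h3,
      Finset.card_insert_of_notMem (by simpa using hxy), Finset.card_singleton]
  set L : List ℕ := (A.sort (· ≤ ·)) ++ x :: y :: (B.sort (· ≤ ·)) with hL
  have hlenA : (A.sort (· ≤ ·)).length = r - 1 := by rw [Finset.length_sort, hc]
  have hlenB : (B.sort (· ≤ ·)).length = r - 2 := by rw [Finset.length_sort, hcardB]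
  have hlen : L.length = 2 * r - 1 := by
    simp only [hL, List.length_append, List.length_cons, hlenA, hlenB]; omega
  have hmemL : ∀ a, a ∈ L ↔ (a ∈ A ∨ a = x ∨ a = y ∨ a ∈ B) := by
    intro a
    simp only [hL, List.mem_append, List.mem_cons, Finset.mem_sort]
    try tauto
  have hnd : L.Nodup := by
    rw [hL, List.nodup_append]
    refine ⟨Finset.sort_nodup _ _, ?_, ?_⟩
    · refine List.Nodup.cons ?_ (List.Nodup.cons ?_ (Finset.sort_nodup _ _))
      · simp only [List.mem_cons, Finset.mem_sort, hB, Finset.mem_sdiff]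
        rintro (rfl | hxB)
        · exact hxy rfl
        · exact hxB.2 (by simp)
      · simp only [Finset.mem_sort, hB, Finset.mem_sdiff]
        intro hyB
        exact hyB.2 (by simp)
    · intro a haA b hbL hab
      subst hab
      rw [Finset.mem_sort] at haA
      simp only [List.mem_cons, Finset.mem_sort] at hbL
      rcases hbL with rfl | rfl | hbB
      · exact hxA haA
      · exact hyA haA
      · rw [hB, Finset.mem_sdiff] at hbB
        exact hdisj a hbB.1 haA
  have hgn : (genTriangle r).n = 2 * r - 1 := rfl
  refine ⟨fun i => L.getD i 0, ?_, ?_, ?_⟩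
  · intro i hi j hj hf
    simp only [Set.mem_Iio, hgn] at hi hj
    have hi' : i < L.length := by omega
    have hj' : j < L.length := by omega
    change L.getD i 0 = L.getD j 0 at hf
    rw [List.getD_eq_getElem L 0 hi', List.getD_eq_getElem L 0 hj'] at hf
    exact (hnd.getElem_inj_iff).1 hf
  · intro v hv
    rw [hgn] at hv
    have hv' : v < L.length := by omega
    show L.getD v 0 < F.n
    rw [List.getD_eq_getElem L 0 hv']
    have : L[v] ∈ L := List.getElem_mem _
    rw [hmemL] at this
    rcases this with h | h | h | h
    · exact F.valid e1 h1 _ (by rw [he1]; exact Finset.mem_insert_of_mem h)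
    · exact F.valid e3 h3 _ (h ▸ hx3)
    · exact F.valid e3 h3 _ (h ▸ hy3)
    · exact F.valid e3 h3 _ (by rw [hB, Finset.mem_sdiff] at h; exact h.1)
  · intro D hD
    have h2r : 2 ≤ r := by omega
    rw [genTriangle] at hD
    simp only [dif_pos h2r, Finset.mem_insert, Finset.mem_singleton] at hD
    have himA : (Finset.range (r - 1)).image (fun i => L.getD i 0) = A := by
      rw [Finset.image_congr (g := fun i => (A.sort (· ≤ ·)).getD i 0)
        (fun i hi => by
          simp only [Finset.coe_filter, Set.mem_setOf_eq, Finset.mem_coe,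
            Finset.mem_range] at hi
          exact List.getD_append _ _ 0 i (by omega))]
      rw [image_range_getD _ (by omega)]
      exact Finset.sort_toFinset _ _
    have hfr1 : L.getD (r - 1) 0 = x := by
      rw [hL, List.getD_append_right _ _ 0 _ (by omega)]
      rw [hlenA]
      simp
    have hfr : L.getD r 0 = y := by
      rw [hL, List.getD_append_right _ _ 0 _ (by omega)]
      rw [hlenA]
      have : r - (r - 1) = 1 := by omega
      rw [this]
      simp
    rcases hD with rfl | rfl | rfl
    · have : (Finset.range r).image (fun i => L.getD i 0) = e1 := by
        have hrsucc : r = (r - 1) + 1 := by omega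
        rw [hrsucc, Finset.range_add_one]
        simp only [Finset.image_insert, hfr1, himA]
        exact he1.symm
      rw [this]; exact h1
    · have : (insert r (Finset.range (r - 1))).image (fun i => L.getD i 0) = e2 := by
        simp only [Finset.image_insert, hfr, himA]
        exact he2.symm
      rw [this]; exact h2
    · have hico : Finset.Ico (r - 1) (2 * r - 1) =
          (Finset.range r).image (fun i => i + (r - 1)) := by
        ext a
        simp only [Finset.mem_Ico, Finset.mem_image, Finset.mem_range]
        constructor
        · intro h; exact ⟨a - (r - 1), by omega, by omega⟩
        · rintro ⟨i, hi, rfl⟩; omega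
      have : (Finset.Ico (r - 1) (2 * r - 1)).image (fun i => L.getD i 0) = e3 := by
        rw [hico, Finset.image_image]
        have hcong : ∀ i ∈ Finset.range r,
            L.getD (i + (r - 1)) 0 = (x :: y :: (B.sort (· ≤ ·))).getD i 0 := by
          intro i hi
          rw [hL, List.getD_append_right _ _ 0 _ (by omega), hlenA]
          congr 1
          omega
        rw [Finset.image_congr (g := fun i => (x :: y :: (B.sort (· ≤ ·))).getD i 0)
          (fun i hi => by
            simp only [Finset.coe_filter, Set.mem_setOf_eq, Finset.mem_coe,
              Finset.mem_range] at hi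
            exact hcong i (Finset.mem_range.2 (by omega)))]
        rw [image_range_getD _ (by simp only [List.length_cons, hlenB]; omega)]
        simp only [List.toFinset_cons, Finset.sort_toFinset]
        rw [hB]
        ext a
        simp only [Finset.mem_insert, Finset.mem_sdiff, Finset.mem_singleton]
        constructor
        · rintro (rfl | rfl | ⟨h, -⟩)
          · exact hx3
          · exact hy3
          · exact h
        · intro h
          by_cases hax : a = x
          · exact Or.inl hax
          by_cases hay : a = y
          · exact Or.inr (Or.inl hay)
          exact Or.inr (Or.inr ⟨h, by tauto⟩)
      rw [this]; exact h3


/-- For `r ≥ 3` and every `ε > 0` there is `n0` such that every `T_r`-free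
`r`-graph `F` on `n ≥ n0` vertices has a `Σ_r`-free subgraph `F̂ ⊆ F` with
`|F̂| ≥ |F| - ε n^r`. -/
theorem sigma_free_subgraph (r : ℕ) (hr : 3 ≤ r) :
    ∀ ε > (0 : ℝ), ∃ n0 : ℕ, ∀ F : RGraph r, n0 ≤ F.n →
      ¬ ContainsCopy F (genTriangle r) →
      ∃ Fh : RGraph r, Fh.n = F.n ∧ Fh.edges ⊆ F.edges ∧
        FreeFam (SigmaFam r) Fh ∧
        (F.edges.card : ℝ) - ε * (F.n : ℝ) ^ r ≤ (Fh.edges.card : ℝ) := by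
  intro ε hε
  refine ⟨max 1 ⌈(r : ℝ) / ε⌉₊, ?_⟩
  intro F hn hT
  classical
  have hn1 : 1 ≤ F.n := le_trans (le_max_left _ _) hn
  set P : Finset ℕ → Prop := fun e => ∀ e1 ∈ F.edges, ∀ e2 ∈ F.edges,
    (e1 ∩ e2).card = r - 1 → ¬ symmDiff e1 e2 ⊆ e with hP
  refine ⟨⟨F.n, F.edges.filter P, fun e he => F.uniform e (Finset.mem_filter.1 he).1,
    fun e he => F.valid e (Finset.mem_filter.1 he).1⟩, rfl, Finset.filter_subset _ _, ?_, ?_⟩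
  · rintro H ⟨D1, D2, D3, hHe, hne12, -, -, hcard, hsubD⟩ ⟨f, hinj, hbd, hmap⟩
    have hm1 : D1 ∈ H.edges := by rw [hHe]; simp
    have hm2 : D2 ∈ H.edges := by rw [hHe]; simp
    have hm3 : D3 ∈ H.edges := by rw [hHe]; simp
    have hi1 := hmap D1 hm1
    have hi2 := hmap D2 hm2
    have hi3 := hmap D3 hm3
    have hP3 : P (D3.image f) := (Finset.mem_filter.1 hi3).2
    have hinj12 : Set.InjOn f (↑D1 ∪ ↑D2) := by
      apply hinj.mono
      intro v hv
      rcases hv with hv | hv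
      · exact H.valid D1 hm1 v hv
      · exact H.valid D2 hm2 v hv
    have hcard' : ((D1.image f) ∩ (D2.image f)).card = r - 1 := by
      rw [← Finset.image_inter_of_injOn _ _ hinj12,
        Finset.card_image_of_injOn (hinj12.mono ?_), hcard]
      intro v hv
      rw [Finset.coe_inter] at hv
      exact Or.inl hv.1
    have hsub' : symmDiff (D1.image f) (D2.image f) ⊆ D3.image f := by
      intro b hb
      apply Finset.image_subset_image hsubD
      rw [Finset.mem_symmDiff] at hb
      rcases hb with ⟨hb1, hb2⟩ | ⟨hb1, hb2⟩
      · obtain ⟨a, ha, rfl⟩ := Finset.mem_image.1 hb1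
        exact Finset.mem_image_of_mem f (Finset.mem_symmDiff.2
          (Or.inl ⟨ha, fun h => hb2 (Finset.mem_image_of_mem f h)⟩))
      · obtain ⟨a, ha, rfl⟩ := Finset.mem_image.1 hb1
        exact Finset.mem_image_of_mem f (Finset.mem_symmDiff.2
          (Or.inr ⟨ha, fun h => hb2 (Finset.mem_image_of_mem f h)⟩))
    exact hP3 _ (Finset.mem_of_mem_filter _ hi1) _ (Finset.mem_of_mem_filter _ hi2)
      hcard' hsub'
  · set Del := F.edges.filter (fun e => ¬ P e) with hDelDef
    have hsplit : (F.edges.filter P).card + Del.card = F.edges.card :=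
      Finset.card_filter_add_card_filter_not (p := P)
    set Q : Finset ℕ → Finset ℕ × Finset ℕ → Prop := fun p q =>
      q.1 ∈ F.edges ∧ q.2 ∈ F.edges ∧ (q.1 ∩ q.2).card = r - 1 ∧ symmDiff q.1 q.2 = p
      with hQ
    set W : Finset ℕ → Finset ℕ × Finset ℕ := fun p =>
      if h : ∃ q, Q p q then h.choose else (∅, ∅) with hWdef
    have hW : ∀ p, (∃ q, Q p q) → Q p (W p) := by
      intro p h
      rw [hWdef]
      simp only [dif_pos h]
      exact h.choose_spec
    set av : ℕ → ℕ → ℕ → ℕ := fun u v j =>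
      (((W {u, v}).1 ∩ (W {u, v}).2).sort (· ≤ ·)).getD j 0 with havdef
    set rebuild : ℕ × ℕ × ℕ × Finset ℕ → Finset ℕ := fun t =>
      insert t.1 (insert t.2.1 (insert (av t.1 t.2.1 t.2.2.1) t.2.2.2)) with hrdef
    set Target := (Finset.range F.n) ×ˢ (Finset.range F.n) ×ˢ (Finset.range (r - 1)) ×ˢ
      (Finset.range F.n).powersetCard (r - 3) with hTdef
    have hsubT : Del ⊆ Target.image rebuild := by
      intro e he
      obtain ⟨heF, hbad⟩ := Finset.mem_filter.1 he
      have hbad' : ¬ (∀ e1 ∈ F.edges, ∀ e2 ∈ F.edges,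
          (e1 ∩ e2).card = r - 1 → ¬ symmDiff e1 e2 ⊆ e) := hbad
      push_neg at hbad'
      obtain ⟨e1, h1, e2, h2, hc, hsub⟩ := hbad'
      have hex : ∃ q, Q (symmDiff e1 e2) q := ⟨(e1, e2), h1, h2, hc, rfl⟩
      obtain ⟨hc1, hc2, hcc, hpp⟩ := hW _ hex
      obtain ⟨x1, y1, hxy1, hce1, hce2, hx1A, hy1A, hsd1⟩ := pair_struct hr F hc1 hc2 hcc
      have hpxy : ({x1, y1} : Finset ℕ) = symmDiff e1 e2 := hsd1.symm.trans hpp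
      have hpe : ({x1, y1} : Finset ℕ) ⊆ e := by rw [hpxy]; exact hsub
      have hx1e : x1 ∈ e := hpe (by simp)
      have hy1e : y1 ∈ e := hpe (by simp)
      have hexa : ∃ a ∈ e, a ∈ (W (symmDiff e1 e2)).1 ∩ (W (symmDiff e1 e2)).2 := by
        by_contra hno
        push_neg at hno
        exact hT (trCopy hr F hc1 hc2 heF hcc (by rw [hpp]; exact hsub) hno)
      obtain ⟨a, hae, haA⟩ := hexa
      have hax1 : a ≠ x1 := fun h => hx1A (h ▸ haA)
      have hay1 : a ≠ y1 := fun h => hy1A (h ▸ haA)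
      have haA' : a ∈ (((W (symmDiff e1 e2)).1 ∩ (W (symmDiff e1 e2)).2).sort (· ≤ ·)) :=
        (Finset.mem_sort _).2 haA
      obtain ⟨j, hj, hja⟩ := List.mem_iff_getElem.1 haA'
      have hjlt : j < r - 1 := by rwa [Finset.length_sort, hcc] at hj
      have hWW : W ({x1, y1} : Finset ℕ) = W (symmDiff e1 e2) := congrArg W hpxy
      have hav : av x1 y1 j = a := by
        show (((W {x1, y1}).1 ∩ (W {x1, y1}).2).sort (· ≤ ·)).getD j 0 = a
        rw [hWW, List.getD_eq_getElem _ 0 hj]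
        exact hja
      have h3sub : ({x1, y1, a} : Finset ℕ) ⊆ e := by
        intro b hb
        simp only [Finset.mem_insert, Finset.mem_singleton] at hb
        rcases hb with rfl | rfl | rfl <;> assumption
      have hrest : (e \ {x1, y1, a}).card = r - 3 := by
        rw [Finset.card_sdiff_of_subset h3sub, F.uniform e heF]
        have : ({x1, y1, a} : Finset ℕ).card = 3 := by
          rw [Finset.card_insert_of_notMem (by simp [hxy1, Ne.symm hax1]),
            Finset.card_insert_of_notMem (by simp [Ne.symm hay1]),
            Finset.card_singleton]
        rw [this]
      have hesub : e ⊆ Finset.range F.n := fun v hv =>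
        Finset.mem_range.2 (F.valid e heF v hv)
      have memT : (x1, y1, j, e \ {x1, y1, a}) ∈ Target := by
        rw [hTdef]
        simp only [Finset.mem_product, Finset.mem_range, Finset.mem_powersetCard]
        exact ⟨F.valid e heF x1 hx1e, F.valid e heF y1 hy1e, hjlt,
          Finset.sdiff_subset.trans hesub, hrest⟩
      have hre : insert x1 (insert y1 (insert a (e \ {x1, y1, a}))) = e := by
        ext b
        simp only [Finset.mem_insert, Finset.mem_sdiff, Finset.mem_singleton]
        constructor
        · rintro (rfl | rfl | rfl | ⟨hb, -⟩)
          · exact hx1e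
          · exact hy1e
          · exact hae
          · exact hb
        · intro hb
          by_cases hb1 : b = x1
          · tauto
          by_cases hb2 : b = y1
          · tauto
          by_cases hb3 : b = a
          · tauto
          exact Or.inr (Or.inr (Or.inr ⟨hb, by tauto⟩))
      refine Finset.mem_image.2 ⟨(x1, y1, j, e \ {x1, y1, a}), memT, ?_⟩
      show insert x1 (insert y1 (insert (av x1 y1 j) (e \ {x1, y1, a}))) = e
      rw [hav]
      exact hre
    have hcount : Del.card ≤ (r - 1) * F.n ^ (r - 1) := by
      calc Del.card ≤ (Target.image rebuild).card := Finset.card_le_card hsubT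
        _ ≤ Target.card := Finset.card_image_le
        _ = F.n * (F.n * ((r - 1) * (F.n.choose (r - 3)))) := by
            rw [hTdef]
            simp [Finset.card_product, Finset.card_powersetCard, Finset.card_range]
        _ ≤ F.n * (F.n * ((r - 1) * F.n ^ (r - 3))) := by
            gcongr
            exact Nat.choose_le_pow _ _
        _ = (r - 1) * F.n ^ (r - 1) := by
            have h2 : 2 + (r - 3) = r - 1 := by omega
            calc F.n * (F.n * ((r - 1) * F.n ^ (r - 3)))
                = (r - 1) * (F.n ^ 2 * F.n ^ (r - 3)) := by ring
              _ = (r - 1) * F.n ^ (2 + (r - 3)) := by rw [pow_add]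
              _ = (r - 1) * F.n ^ (r - 1) := by rw [h2]
    have hnR : (1 : ℝ) ≤ (F.n : ℝ) := by exact_mod_cast hn1
    have hre : (r : ℝ) ≤ ε * F.n := by
      have h1 : (⌈(r : ℝ) / ε⌉₊ : ℕ) ≤ F.n := le_trans (le_max_right _ _) hn
      have h2 : (r : ℝ) / ε ≤ (F.n : ℝ) := le_trans (Nat.le_ceil _) (by exact_mod_cast h1)
      have h3 : (r : ℝ) ≤ (F.n : ℝ) * ε := (div_le_iff₀ hε).1 h2
      linarith [mul_comm (F.n : ℝ) ε]
    have hDelR : (Del.card : ℝ) ≤ ε * (F.n : ℝ) ^ r := by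
      have hcast : ((Del.card : ℕ) : ℝ) ≤ (((r - 1) * F.n ^ (r - 1) : ℕ) : ℝ) :=
        Nat.cast_le.2 hcount
      rw [Nat.cast_mul, Nat.cast_pow, Nat.cast_sub (by omega : 1 ≤ r), Nat.cast_one]
        at hcast
      have hpow' : ∀ m : ℕ, 1 ≤ m → ∀ x : ℝ, x ^ m = x * x ^ (m - 1) := by
        intro m hm x
        conv_lhs => rw [show m = (m - 1) + 1 from by omega]
        rw [pow_succ]
        ring
      have hpow : (F.n : ℝ) ^ r = (F.n : ℝ) * (F.n : ℝ) ^ (r - 1) :=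
        hpow' r (by omega) _
      calc (Del.card : ℝ) ≤ ((r : ℝ) - 1) * (F.n : ℝ) ^ (r - 1) := hcast
        _ ≤ (ε * F.n) * (F.n : ℝ) ^ (r - 1) := by
            apply mul_le_mul_of_nonneg_right _ (pow_nonneg (by linarith) _)
            linarith
        _ = ε * (F.n : ℝ) ^ r := by rw [hpow]; ring
    have hsR : ((F.edges.filter P).card : ℝ) + (Del.card : ℝ) = (F.edges.card : ℝ) := by
      exact_mod_cast hsplit
    show (F.edges.card : ℝ) - ε * (F.n : ℝ) ^ r ≤ ((F.edges.filter P).card : ℝ)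
    linarith


end TuranGT
end
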